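/- arXiv:2311.17623 — 5 statements merged into one kernel-verified Lean document; each statement's English description precedes it below -/
import Mathlib

section
/- Let (ξᵢ) be i.i.d. real random variables with |ξᵢ| ≤ C almost surely and E[ξᵢ] = 0, and set Tₖ = (1/k)∑_{i=1}^k ξᵢ. Then for every η > 0 and every n ∈ ℕ, P(sup_{k ≥ n} Tₖ > η) ≤ exp(-n η² / (2 C²)). -/
open MeasureTheory ProbabilityTheory

lemma aux_chord (C h x : ℝ) (hC : 0 < C) (hx : |x| ≤ C) :
    Real.exp (h * x) ≤ Real.cosh (h * C) + (x / C) * Real.sinh (h * C) := by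
  have habs := abs_le.1 hx
  have h2C : (0:ℝ) < 2 * C := by linarith
  have ha1 : (0:ℝ) ≤ (C - x) / (2 * C) := div_nonneg (by linarith) (by linarith)
  have hb1 : (0:ℝ) ≤ (C + x) / (2 * C) := div_nonneg (by linarith) (by linarith)
  have hab1 : (C - x) / (2 * C) + (C + x) / (2 * C) = 1 := by field_simp; ring
  have key := convexOn_exp.2 (Set.mem_univ (-(h * C))) (Set.mem_univ (h * C)) ha1 hb1 hab1
  simp only [smul_eq_mul] at key
  have e1 : (C - x) / (2 * C) * (-(h * C)) + (C + x) / (2 * C) * (h * C) = h * x := by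
    field_simp; ring
  rw [e1] at key
  have e2 : (C - x) / (2 * C) * Real.exp (-(h * C)) + (C + x) / (2 * C) * Real.exp (h * C)
      = (Real.exp (h * C) + Real.exp (-(h * C))) / 2
        + (x / C) * ((Real.exp (h * C) - Real.exp (-(h * C))) / 2) := by
    field_simp; ring
  rw [Real.cosh_eq, Real.sinh_eq]
  linarith [key, e2.symm.le, e2.le]

lemma aux_mgf {Ω : Type*} [MeasurableSpace Ω] (P : Measure Ω) [IsProbabilityMeasure P]
    (X : Ω → ℝ) (hm : Measurable X) (C h : ℝ) (hC : 0 < C)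
    (hb : ∀ᵐ ω ∂P, |X ω| ≤ C) (hc : ∫ ω, X ω ∂P = 0) :
    ∫ ω, Real.exp (h * X ω) ∂P ≤ Real.exp (h ^ 2 * C ^ 2 / 2) := by
  have hintX : Integrable X P := by
    refine (integrable_const C).mono' hm.aestronglyMeasurable ?_
    filter_upwards [hb] with ω hω; simpa using hω
  have hintE : Integrable (fun ω => Real.exp (h * X ω)) P := by
    refine (integrable_const (Real.exp (|h| * C))).mono'
      ((hm.const_mul h).exp).aestronglyMeasurable ?_
    filter_upwards [hb] with ω hω
    rw [Real.norm_eq_abs, Real.abs_exp]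
    refine Real.exp_le_exp.2 ?_
    calc h * X ω ≤ |h * X ω| := le_abs_self _
      _ = |h| * |X ω| := abs_mul _ _
      _ ≤ |h| * C := mul_le_mul_of_nonneg_left hω (abs_nonneg h)
  have hintR : Integrable (fun ω => Real.cosh (h * C) + (X ω / C) * Real.sinh (h * C)) P :=
    (integrable_const _).add ((hintX.div_const C).mul_const _)
  have hmono : ∫ ω, Real.exp (h * X ω) ∂P
      ≤ ∫ ω, (Real.cosh (h * C) + (X ω / C) * Real.sinh (h * C)) ∂P := by
    refine integral_mono_ae hintE hintR ?_
    filter_upwards [hb] with ω hω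
    exact aux_chord C h (X ω) hC hω
  have hval : ∫ ω, (Real.cosh (h * C) + (X ω / C) * Real.sinh (h * C)) ∂P
      = Real.cosh (h * C) := by
    rw [integral_add (integrable_const _) ((hintX.div_const C).mul_const _),
      integral_const, integral_mul_const, integral_div, hc]
    simp
  calc ∫ ω, Real.exp (h * X ω) ∂P ≤ Real.cosh (h * C) := hval ▸ hmono
    _ ≤ Real.exp ((h * C) ^ 2 / 2) := Real.cosh_le_exp_half_sq _
    _ = Real.exp (h ^ 2 * C ^ 2 / 2) := by rw [mul_pow]

lemma aux_step {Ω : Type*} [MeasurableSpace Ω] (P : Measure Ω) [IsProbabilityMeasure P]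
    (ξ : ℕ → Ω → ℝ) (hmeas : ∀ i, Measurable (ξ i))
    (hindep : iIndepFun ξ P)
    (h a : ℝ) (m : ℕ)
    (hmgf : ∫ ω, Real.exp (h * ξ m ω) ∂P ≤ Real.exp a)
    (g : (↥(Finset.range m) → ℝ) → ℝ) (hg : Measurable g) (hg0 : ∀ v, 0 ≤ g v) :
    ∫ ω, g (fun i => ξ i ω) * Real.exp (h * ξ m ω - a) ∂P
      ≤ ∫ ω, g (fun i => ξ i ω) ∂P := by
  have hdisj : Disjoint (Finset.range m) ({m} : Finset ℕ) := by
    simp [Finset.disjoint_singleton_right]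
  have hbase := hindep.indepFun_finset (Finset.range m) {m} hdisj hmeas
  have hψ : Measurable (fun v : (↥({m} : Finset ℕ) → ℝ) =>
      Real.exp (h * v ⟨m, Finset.mem_singleton_self m⟩ - a)) := by
    fun_prop
  have hlife : IndepFun (fun ω => g (fun i => ξ i ω))
      (fun ω => Real.exp (h * ξ m ω - a)) P := hbase.comp hg hψ
  have hX : AEStronglyMeasurable (fun ω => g (fun i => ξ i ω)) P :=
    (hg.comp (measurable_pi_lambda _ fun i => hmeas i)).aestronglyMeasurable
  have hY : AEStronglyMeasurable (fun ω => Real.exp (h * ξ m ω - a)) P :=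
    ((((hmeas m).const_mul h).sub measurable_const).exp).aestronglyMeasurable
  have hInt := hlife.integral_mul_eq_mul_integral hX hY
  rw [show (fun ω => g (fun i => ξ i ω) * Real.exp (h * ξ m ω - a))
      = (fun ω => g (fun i => ξ i ω)) * (fun ω => Real.exp (h * ξ m ω - a)) from rfl, hInt]
  have h1 : ∫ ω, Real.exp (h * ξ m ω - a) ∂P ≤ 1 := by
    have : (fun ω => Real.exp (h * ξ m ω - a)) = fun ω => Real.exp (h * ξ m ω) / Real.exp a := by
      funext ω; rw [Real.exp_sub]
    rw [this, integral_div, div_le_one (Real.exp_pos a)]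
    exact hmgf
  have h0 : 0 ≤ ∫ ω, g (fun i => ξ i ω) ∂P := integral_nonneg fun ω => hg0 _
  calc (∫ ω, g (fun i => ξ i ω) ∂P) * ∫ ω, Real.exp (h * ξ m ω - a) ∂P
      ≤ (∫ ω, g (fun i => ξ i ω) ∂P) * 1 := mul_le_mul_of_nonneg_left h1 h0
    _ = ∫ ω, g (fun i => ξ i ω) ∂P := mul_one _
/-- Supremal Hoeffding-type bound for sample means of i.i.d. bounded centered variables:
`P(sup_{k ≥ n} T_k > η) ≤ exp(-n η² / (2C²))`. -/
theorem stmt_5 {Ω : Type*} [MeasurableSpace Ω] (P : Measure Ω) [IsProbabilityMeasure P]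
    (ξ : ℕ → Ω → ℝ) (hmeas : ∀ i, Measurable (ξ i))
    (hindep : iIndepFun ξ P)
    (hident : ∀ i, Measure.map (ξ i) P = Measure.map (ξ 0) P)
    (C : ℝ) (hC : 0 < C) (hbdd : ∀ i, ∀ᵐ ω ∂P, |ξ i ω| ≤ C)
    (hcent : ∀ i, ∫ ω, ξ i ω ∂P = 0)
    (T : ℕ → Ω → ℝ) (hT : ∀ k ω, T k ω = (1 / (k : ℝ)) * ∑ i ∈ Finset.range k, ξ i ω)
    (η : ℝ) (hη : 0 < η) (n : ℕ) (hn : 1 ≤ n) :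
    (P {ω | ∃ k, n ≤ k ∧ η < T k ω}).toReal ≤
      Real.exp (-(n : ℝ) * η ^ 2 / (2 * C ^ 2)) := by
  classical
  have hC2 : (0:ℝ) < C ^ 2 := by positivity
  set h : ℝ := η / C ^ 2 with hh
  set a : ℝ := η ^ 2 / (2 * C ^ 2) with ha
  have hhpos : 0 < h := by positivity
  have hapos : 0 < a := by positivity
  have hha : h ^ 2 * C ^ 2 / 2 = a := by rw [hh, ha]; field_simp
  have h2a : h * η = 2 * a := by rw [hh, ha]; field_simp
  have hmgf : ∀ i, ∫ ω, Real.exp (h * ξ i ω) ∂P ≤ Real.exp a := fun i =>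
    hha ▸ aux_mgf P (ξ i) (hmeas i) C h hC (hbdd i) (hcent i)
  set S : ℕ → Ω → ℝ := fun k ω => ∑ i ∈ Finset.range k, ξ i ω with hS
  have hSmeas : ∀ k, Measurable (S k) := fun k => Finset.measurable_sum _ fun i _ => hmeas i
  set Z : ℕ → Ω → ℝ := fun k ω => Real.exp (h * S k ω - k * a) with hZ
  have hZmeas : ∀ k, Measurable (Z k) := fun k =>
    (((hSmeas k).const_mul h).sub measurable_const).exp
  have hZpos : ∀ k ω, 0 < Z k ω := fun k ω => Real.exp_pos _
  have habdd : ∀ᵐ ω ∂P, ∀ i, |ξ i ω| ≤ C := (ae_all_iff).2 hbdd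
  have hZint : ∀ k, Integrable (Z k) P := by
    intro k
    refine (integrable_const (Real.exp (h * (k * C) + k * a))).mono'
      (hZmeas k).aestronglyMeasurable ?_
    filter_upwards [habdd] with ω hω
    rw [Real.norm_eq_abs, Real.abs_exp]
    refine Real.exp_le_exp.2 ?_
    have hSb : |S k ω| ≤ k * C := by
      calc |S k ω| ≤ ∑ i ∈ Finset.range k, |ξ i ω| := Finset.abs_sum_le_sum_abs _ _
        _ ≤ ∑ _i ∈ Finset.range k, C := Finset.sum_le_sum fun i _ => hω i
        _ = k * C := by simp [mul_comm]
    have h1 : h * S k ω ≤ h * (k * C) := by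
      refine mul_le_mul_of_nonneg_left ?_ hhpos.le
      exact (le_abs_self _).trans hSb
    have hk : (0:ℝ) ≤ (k:ℝ) * a := by positivity
    linarith
  set Eset : ℕ → Set Ω := fun k => {ω | (k:ℝ) * η < S k ω} with hE
  have hEmeas : ∀ k, MeasurableSet (Eset k) := fun k =>
    measurableSet_lt measurable_const (hSmeas k)
  set D : ℕ → Set Ω := fun k => {ω | ∀ j, n ≤ j → j < k → S j ω ≤ j * η} with hD
  have hDmeas : ∀ k, MeasurableSet (D k) := by
    intro k
    have hre : D k = ⋂ j, ⋂ (_ : n ≤ j), ⋂ (_ : j < k), {ω | S j ω ≤ j * η} := by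
      ext ω; simp [hD]
    rw [hre]
    exact MeasurableSet.iInter fun j => MeasurableSet.iInter fun _ =>
      MeasurableSet.iInter fun _ => measurableSet_le (hSmeas j) measurable_const
  set B : ℕ → Set Ω := fun k => D k ∩ Eset k with hB
  have hBmeas : ∀ k, MeasurableSet (B k) := fun k => (hDmeas k).inter (hEmeas k)
  -- supermartingale step
  have hstep : ∀ m : ℕ, ∫ ω, Set.indicator (D (m+1)) (Z (m+1)) ω ∂P
      ≤ ∫ ω, Set.indicator (D (m+1)) (Z m) ω ∂P := by
    intro m
    set tup : Ω → (↥(Finset.range m) → ℝ) := fun ω i => ξ i ω with htup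
    set gS : ℕ → (↥(Finset.range m) → ℝ) → ℝ :=
      fun j v => ∑ i : ↥(Finset.range m), if (i : ℕ) < j then v i else 0 with hgSdef
    have hgSmeas : ∀ j, Measurable (gS j) := by
      intro j
      refine Finset.measurable_sum _ fun i _ => ?_
      rcases lt_or_ge (i : ℕ) j with hij | hij
      · simp only [if_pos hij]
        exact measurable_pi_apply i
      · simp only [if_neg (not_lt.2 hij)]
        exact measurable_const
    have hgS : ∀ j, j ≤ m → ∀ ω, gS j (tup ω) = S j ω := by
      intro j hj ω
      have hfil : (Finset.range m).filter (· < j) = Finset.range j := by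
        ext i
        simp only [Finset.mem_filter, Finset.mem_range]
        omega
      calc gS j (tup ω) = ∑ i : ↥(Finset.range m), if (i : ℕ) < j then ξ (i : ℕ) ω else 0 := rfl
        _ = ∑ i ∈ Finset.range m, if i < j then ξ i ω else 0 :=
          Finset.sum_coe_sort (Finset.range m) (fun t => if t < j then ξ t ω else 0)
        _ = ∑ i ∈ (Finset.range m).filter (· < j), ξ i ω := (Finset.sum_filter _ _).symm
        _ = ∑ i ∈ Finset.range j, ξ i ω := by rw [hfil]
        _ = S j ω := rfl
    set Vset : Set (↥(Finset.range m) → ℝ) :=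
      {v | ∀ j, n ≤ j → j < m + 1 → gS j v ≤ j * η} with hVdef
    have hVmeas : MeasurableSet Vset := by
      have hre : Vset = ⋂ j, ⋂ (_ : n ≤ j), ⋂ (_ : j < m + 1), {v | gS j v ≤ j * η} := by
        ext v; simp [hVdef]
      rw [hre]
      exact MeasurableSet.iInter fun j => MeasurableSet.iInter fun _ =>
        MeasurableSet.iInter fun _ => measurableSet_le (hgSmeas j) measurable_const
    set g : (↥(Finset.range m) → ℝ) → ℝ :=
      Vset.indicator (fun v => Real.exp (h * gS m v - m * a)) with hgdef
    have hgmeas : Measurable g :=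
      Measurable.indicator ((((hgSmeas m).const_mul h).sub measurable_const).exp) hVmeas
    have hg0 : ∀ v, 0 ≤ g v := fun v =>
      Set.indicator_nonneg (fun x _ => (Real.exp_pos _).le) v
    have hcomp : ∀ ω, g (tup ω) = Set.indicator (D (m+1)) (Z m) ω := by
      intro ω
      have hmemiff : tup ω ∈ Vset ↔ ω ∈ D (m+1) := by
        simp only [hVdef, Set.mem_setOf_eq, hD]
        constructor
        · intro H j hj1 hj2
          have := H j hj1 hj2
          rwa [hgS j (by omega) ω] at this
        · intro H j hj1 hj2
          rw [hgS j (by omega) ω]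
          exact H j hj1 hj2
      by_cases hm1 : ω ∈ D (m+1)
      · rw [hgdef, Set.indicator_of_mem (hmemiff.2 hm1), Set.indicator_of_mem hm1,
          hgS m le_rfl ω]
      · rw [hgdef, Set.indicator_of_notMem (fun hc => hm1 (hmemiff.1 hc)),
          Set.indicator_of_notMem hm1]
    calc ∫ ω, Set.indicator (D (m+1)) (Z (m+1)) ω ∂P
        = ∫ ω, g (tup ω) * Real.exp (h * ξ m ω - a) ∂P := by
          refine integral_congr_ae (Filter.Eventually.of_forall fun ω => ?_)
          have hZs : Z (m+1) ω = Z m ω * Real.exp (h * ξ m ω - a) := by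
            simp only [hZ, hS]
            rw [Finset.sum_range_succ, ← Real.exp_add]
            congr 1
            push_cast
            ring
          have hsplitmul : Set.indicator (D (m+1)) (Z (m+1)) ω
              = Set.indicator (D (m+1)) (Z m) ω * Real.exp (h * ξ m ω - a) := by
            by_cases hm1 : ω ∈ D (m+1)
            · rw [Set.indicator_of_mem hm1, Set.indicator_of_mem hm1, hZs]
            · rw [Set.indicator_of_notMem hm1, Set.indicator_of_notMem hm1, zero_mul]
          rw [hsplitmul, ← hcomp ω]
      _ ≤ ∫ ω, g (tup ω) ∂P := aux_step P ξ hmeas hindep h a m (hmgf m) g hgmeas hg0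
      _ = ∫ ω, Set.indicator (D (m+1)) (Z m) ω ∂P :=
          integral_congr_ae (Filter.Eventually.of_forall fun ω => hcomp ω)
  -- splitting
  have hsplit : ∀ m : ℕ, n ≤ m + 1 → ∀ ω,
      Set.indicator (D (m+1)) (Z (m+1)) ω
        = Set.indicator (B (m+1)) (Z (m+1)) ω + Set.indicator (D (m+2)) (Z (m+1)) ω := by
    intro m hm ω
    by_cases h1 : ω ∈ D (m+1)
    · by_cases h2 : ω ∈ Eset (m+1)
      · have hB1 : ω ∈ B (m+1) := ⟨h1, h2⟩
        have hD2 : ω ∉ D (m+2) := by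
          intro hc
          have hle : S (m+1) ω ≤ ((m+1 : ℕ) : ℝ) * η := hc (m+1) (by omega) (by omega)
          have hlt : ((m+1 : ℕ) : ℝ) * η < S (m+1) ω := h2
          linarith
        rw [Set.indicator_of_mem h1, Set.indicator_of_mem hB1, Set.indicator_of_notMem hD2]
        ring
      · have hB1 : ω ∉ B (m+1) := fun hc => h2 hc.2
        have hD2 : ω ∈ D (m+2) := by
          intro j hj1 hj2
          by_cases hj : j < m + 1
          · exact h1 j hj1 hj
          · have hjeq : j = m + 1 := by omega
            subst hjeq
            exact le_of_not_gt h2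
        rw [Set.indicator_of_mem h1, Set.indicator_of_notMem hB1, Set.indicator_of_mem hD2]
        ring
    · have hB1 : ω ∉ B (m+1) := fun hc => h1 hc.1
      have hD2 : ω ∉ D (m+2) := fun hc => h1 fun j hj1 hj2 => hc j hj1 (by omega)
      rw [Set.indicator_of_notMem h1, Set.indicator_of_notMem hB1,
        Set.indicator_of_notMem hD2]
      ring
  have hDuniv : ∀ k, k ≤ n → D k = Set.univ := by
    intro k hk
    ext ω
    simp only [hD, Set.mem_setOf_eq, Set.mem_univ, iff_true]
    intro j hj1 hj2
    exact absurd hj2 (by omega)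
  have hZone : ∀ k, k ≤ n → ∫ ω, Z k ω ∂P ≤ 1 := by
    intro k
    induction k with
    | zero =>
      intro _
      have : ∀ ω, Z 0 ω = 1 := by intro ω; simp [hZ, hS]
      simp [this]
    | succ k ih =>
      intro hk1
      have h1 := hstep k
      rw [hDuniv (k+1) hk1] at h1
      simp only [Set.indicator_univ] at h1
      exact h1.trans (ih (by omega))
  -- main induction
  have hmain : ∀ m, n ≤ m →
      (∑ k ∈ Finset.Icc n m, ∫ ω, Set.indicator (B k) (Z k) ω ∂P)
        + ∫ ω, Set.indicator (D (m+1)) (Z m) ω ∂P ≤ 1 := by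
    intro m
    induction m with
    | zero => intro hm; omega
    | succ m ih =>
      intro hm
      have e2 : ∫ ω, Set.indicator (B (m+1)) (Z (m+1)) ω ∂P
          + ∫ ω, Set.indicator (D (m+2)) (Z (m+1)) ω ∂P
          = ∫ ω, Set.indicator (D (m+1)) (Z (m+1)) ω ∂P := by
        rw [← integral_add ((hZint _).indicator (hBmeas _)) ((hZint _).indicator (hDmeas _))]
        exact integral_congr_ae (Filter.Eventually.of_forall fun ω => (hsplit m hm ω).symm)
      rw [Finset.sum_Icc_succ_top hm]
      by_cases hm' : n ≤ m
      · have IH := ih hm'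
        have h3 := hstep m
        linarith
      · have hnm : n = m + 1 := by omega
        have hs : ∑ k ∈ Finset.Icc n m, ∫ ω, Set.indicator (B k) (Z k) ω ∂P = 0 := by
          rw [Finset.Icc_eq_empty (by omega), Finset.sum_empty]
        rw [hs, zero_add]
        have h3 := hstep m
        have h4 : ∫ ω, Set.indicator (D (m+1)) (Z m) ω ∂P ≤ 1 := by
          rw [hDuniv (m+1) (by omega)]
          simp only [Set.indicator_univ]
          exact hZone m (by omega)
        linarith
  -- lower bound by the measure of the union
  have hlow : ∀ m, n ≤ m →
      Real.exp (n * a) * (P (⋃ k ∈ Finset.Icc n m, Eset k)).toReal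
        ≤ ∑ k ∈ Finset.Icc n m, ∫ ω, Set.indicator (B k) (Z k) ω ∂P := by
    intro m hm
    have hAmeas : MeasurableSet (⋃ k ∈ Finset.Icc n m, Eset k) :=
      Finset.measurableSet_biUnion _ fun k _ => hEmeas k
    have hpt : ∀ ω, Set.indicator (⋃ k ∈ Finset.Icc n m, Eset k)
        (fun _ => Real.exp ((n : ℝ) * a)) ω
        ≤ ∑ k ∈ Finset.Icc n m, Set.indicator (B k) (Z k) ω := by
      intro ω
      by_cases hAω : ω ∈ ⋃ k ∈ Finset.Icc n m, Eset k
      · have hex : ∃ k, n ≤ k ∧ k ≤ m ∧ ω ∈ Eset k := by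
          obtain ⟨k, hk, hkE⟩ := Set.mem_iUnion₂.1 hAω
          exact ⟨k, (Finset.mem_Icc.1 hk).1, (Finset.mem_Icc.1 hk).2, hkE⟩
        obtain ⟨hk₀n, hk₀m, hk₀E⟩ := Nat.find_spec hex
        have hk₀min : ∀ j, n ≤ j → j < Nat.find hex → S j ω ≤ (j : ℝ) * η := by
          intro j hj1 hj2
          by_contra hcon
          push_neg at hcon
          exact Nat.find_min hex hj2 ⟨hj1, by omega, hcon⟩
        have hωB : ω ∈ B (Nat.find hex) := ⟨hk₀min, hk₀E⟩
        have hZk : Real.exp ((n : ℝ) * a) ≤ Z (Nat.find hex) ω := by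
          have hSk : ((Nat.find hex : ℕ) : ℝ) * η < S (Nat.find hex) ω := hk₀E
          refine Real.exp_le_exp.2 ?_
          have hhS : h * (((Nat.find hex : ℕ) : ℝ) * η) < h * S (Nat.find hex) ω :=
            mul_lt_mul_of_pos_left hSk hhpos
          have hcast : (n : ℝ) ≤ ((Nat.find hex : ℕ) : ℝ) := Nat.cast_le.2 hk₀n
          have he : h * (((Nat.find hex : ℕ) : ℝ) * η)
              = ((Nat.find hex : ℕ) : ℝ) * (2 * a) := by rw [← h2a]; ring
          have hna : (n : ℝ) * a ≤ ((Nat.find hex : ℕ) : ℝ) * a :=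
            mul_le_mul_of_nonneg_right hcast hapos.le
          linarith
        calc Set.indicator (⋃ k ∈ Finset.Icc n m, Eset k)
              (fun _ => Real.exp ((n : ℝ) * a)) ω = Real.exp ((n : ℝ) * a) :=
            Set.indicator_of_mem hAω _
          _ ≤ Set.indicator (B (Nat.find hex)) (Z (Nat.find hex)) ω := by
            rw [Set.indicator_of_mem hωB]; exact hZk
          _ ≤ ∑ k ∈ Finset.Icc n m, Set.indicator (B k) (Z k) ω :=
            Finset.single_le_sum
              (fun k _ => Set.indicator_nonneg (fun x _ => (hZpos k x).le) ω)
              (Finset.mem_Icc.2 ⟨hk₀n, hk₀m⟩)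
      · rw [Set.indicator_of_notMem hAω]
        exact Finset.sum_nonneg fun k _ => Set.indicator_nonneg (fun x _ => (hZpos k x).le) ω
    have hint1 : Integrable (Set.indicator (⋃ k ∈ Finset.Icc n m, Eset k)
        fun _ => Real.exp ((n : ℝ) * a)) P := (integrable_const _).indicator hAmeas
    have hint2 : Integrable (fun ω => ∑ k ∈ Finset.Icc n m, Set.indicator (B k) (Z k) ω) P :=
      integrable_finset_sum _ fun k _ => (hZint k).indicator (hBmeas k)
    have hmono := integral_mono hint1 hint2 hpt
    rw [integral_indicator_const _ hAmeas, smul_eq_mul,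
      integral_finset_sum _ (fun k _ => (hZint k).indicator (hBmeas k))] at hmono
    calc Real.exp ((n : ℝ) * a) * (P (⋃ k ∈ Finset.Icc n m, Eset k)).toReal
        = (P (⋃ k ∈ Finset.Icc n m, Eset k)).toReal * Real.exp ((n : ℝ) * a) := mul_comm _ _
      _ ≤ _ := hmono
  have hAm : ∀ m, n ≤ m →
      (P (⋃ k ∈ Finset.Icc n m, Eset k)).toReal ≤ Real.exp (-((n:ℝ) * a)) := by
    intro m hm
    have h1 := hlow m hm
    have h2 := hmain m hm
    have h3 : 0 ≤ ∫ ω, Set.indicator (D (m+1)) (Z m) ω ∂P :=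
      integral_nonneg fun ω => Set.indicator_nonneg (fun x _ => (hZpos m x).le) ω
    have h4 : Real.exp ((n:ℝ) * a) * (P (⋃ k ∈ Finset.Icc n m, Eset k)).toReal ≤ 1 := by
      refine h1.trans ?_
      linarith
    rw [Real.exp_neg, inv_eq_one_div, le_div_iff₀ (Real.exp_pos _)]
    linarith [h4]
  -- identify the event
  have hMeq : {ω | ∃ k, n ≤ k ∧ η < T k ω}
      = ⋃ m : ℕ, ⋃ k ∈ Finset.Icc n (n + m), Eset k := by
    ext ω
    simp only [Set.mem_setOf_eq, Set.mem_iUnion, Finset.mem_Icc, exists_prop, hE]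
    constructor
    · rintro ⟨k, hk, hTk⟩
      refine ⟨k - n, k, ⟨hk, by omega⟩, ?_⟩
      have hk0 : (0 : ℝ) < (k : ℝ) := by exact_mod_cast (by omega : 0 < k)
      rw [hT] at hTk
      show (k : ℝ) * η < S k ω
      rw [one_div, inv_mul_eq_div] at hTk
      have := (lt_div_iff₀ hk0).1 hTk
      have hSd : S k ω = ∑ i ∈ Finset.range k, ξ i ω := rfl
      rw [hSd]
      linarith
    · rintro ⟨m', k, ⟨hk1, hk2⟩, hkE⟩
      refine ⟨k, hk1, ?_⟩
      rw [hT]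
      have hk0 : (0 : ℝ) < (k : ℝ) := by exact_mod_cast (by omega : 0 < k)
      have hkE' : (k : ℝ) * η < S k ω := hkE
      have hSd : S k ω = ∑ i ∈ Finset.range k, ξ i ω := rfl
      rw [one_div, inv_mul_eq_div, lt_div_iff₀ hk0, ← hSd]
      linarith
  rw [hMeq]
  have hdir : Directed (· ⊆ ·) (fun m : ℕ => ⋃ k ∈ Finset.Icc n (n + m), Eset k) := by
    have hmono : Monotone (fun m : ℕ => ⋃ k ∈ Finset.Icc n (n + m), Eset k) := by
      intro m1 m2 hm12 ω hω
      simp only [Set.mem_iUnion, Finset.mem_Icc] at hω ⊢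
      obtain ⟨k, ⟨hk1, hk2⟩, hkE⟩ := hω
      exact ⟨k, ⟨hk1, by omega⟩, hkE⟩
    exact hmono.directed_le
  rw [Directed.measure_iUnion hdir]
  have hexp : Real.exp (-((n:ℝ) * a)) = Real.exp (-(n : ℝ) * η ^ 2 / (2 * C ^ 2)) := by
    rw [ha]; congr 1; ring
  refine ENNReal.toReal_le_of_le_ofReal (Real.exp_nonneg _) ?_
  refine iSup_le fun m => ?_
  have hx := hAm (n + m) (by omega)
  calc P (⋃ k ∈ Finset.Icc n (n + m), Eset k)
      = ENNReal.ofReal ((P (⋃ k ∈ Finset.Icc n (n + m), Eset k)).toReal) :=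
        (ENNReal.ofReal_toReal (measure_ne_top P _)).symm
    _ ≤ ENNReal.ofReal (Real.exp (-(n : ℝ) * η ^ 2 / (2 * C ^ 2))) :=
        ENNReal.ofReal_le_ofReal (hx.trans_eq hexp)
end

section
/- Let X₁, X₂, … be i.i.d. random variables with values in [A, B] (A < B) and mean μ, and let X̄ₖ = (1/k)∑_{i=1}^k Xᵢ. Then for every n ∈ ℕ and every x > 0, P(sup_{k ≥ n} |X̄ₖ - μ| > x) ≤ 2 exp(-2 n x² / (B - A)²). -/
open MeasureTheory ProbabilityTheory


lemma hsum_pos (p : ℝ) (hp0 : 0 ≤ p) (hp1 : p ≤ 1) (v : ℝ) :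
    0 < 1 - p + p * Real.exp v := by
  rcases eq_or_lt_of_le hp0 with h | h
  · simp [← h]
  · have := mul_pos h (Real.exp_pos v)
    linarith

lemma log_mgf_bound (p : ℝ) (hp0 : 0 ≤ p) (hp1 : p ≤ 1) (u : ℝ) :
    Real.log (1 - p + p * Real.exp u) ≤ p * u + u ^ 2 / 8 := by
  set h : ℝ → ℝ := fun v => 1 - p + p * Real.exp v with hh
  have hpos : ∀ v, 0 < h v := hsum_pos p hp0 hp1
  have hd1 : ∀ v, HasDerivAt h (p * Real.exp v) v := fun v =>
    ((Real.hasDerivAt_exp v).const_mul p).const_add (1 - p)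
  set L : ℝ → ℝ := fun v => Real.log (h v) - p * v with hL
  set L' : ℝ → ℝ := fun v => p * Real.exp v / h v - p with hL'
  have hdL : ∀ v, HasDerivAt L (L' v) v := by
    intro v
    have h2 : HasDerivAt (fun v : ℝ => p * v) p v := by
      simpa using (hasDerivAt_id v).const_mul p
    exact ((hd1 v).log (ne_of_gt (hpos v))).sub h2
  have hdL' : ∀ v, HasDerivAt L' (p * Real.exp v * (1 - p) / (h v) ^ 2) v := by
    intro v
    have hq := (((Real.hasDerivAt_exp v).const_mul p).div (hd1 v) (ne_of_gt (hpos v)))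
    have := hq.sub_const p
    refine this.congr_deriv ?_
    simp only [hh]
    ring
  set g : ℝ → ℝ := fun v => v ^ 2 / 8 - L v with hg
  set g' : ℝ → ℝ := fun v => v / 4 - L' v with hg'
  have hdg : ∀ v, HasDerivAt g (g' v) v := by
    intro v
    have h1 : HasDerivAt (fun v : ℝ => v ^ 2 / 8) (v / 4) v := by
      have := (hasDerivAt_pow 2 v).div_const 8
      refine this.congr_deriv ?_
      ring
    exact h1.sub (hdL v)
  have hdg' : ∀ v, HasDerivAt g' (1 / 4 - p * Real.exp v * (1 - p) / (h v) ^ 2) v := by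
    intro v
    have h1 : HasDerivAt (fun v : ℝ => v / 4) (1 / 4) v := by
      simpa using (hasDerivAt_id v).div_const 4
    exact h1.sub (hdL' v)
  have hg''_nonneg : ∀ v, 0 ≤ 1 / 4 - p * Real.exp v * (1 - p) / (h v) ^ 2 := by
    intro v
    rw [sub_nonneg, div_le_iff₀ (pow_pos (hpos v) 2)]
    have : h v = (1 - p) + p * Real.exp v := rfl
    nlinarith [sq_nonneg ((1 - p) - p * Real.exp v)]
  have hmono : Monotone g' := by
    refine monotone_of_deriv_nonneg (fun v => (hdg' v).differentiableAt) ?_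
    intro v
    rw [(hdg' v).deriv]
    exact hg''_nonneg v
  have hg'0 : g' 0 = 0 := by
    have : h 0 = 1 := by simp [hh]
    simp [hg', hL', this]
  have hg0 : g 0 = 0 := by
    have : h 0 = 1 := by simp [hh]
    simp [hg, hL, this]
  have key : 0 ≤ g u := by
    rcases le_total 0 u with hu | hu
    · have hmg : MonotoneOn g (Set.Ici 0) := by
        refine monotoneOn_of_deriv_nonneg (convex_Ici 0)
          (fun v _ => (hdg v).differentiableAt.continuousAt.continuousWithinAt)
          (fun v _ => (hdg v).differentiableAt.differentiableWithinAt) ?_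
        intro v hv
        rw [(hdg v).deriv]
        rw [interior_Ici] at hv
        have := hmono (le_of_lt hv)
        rw [hg'0] at this
        exact this
      have := hmg (Set.self_mem_Ici) (Set.mem_Ici.2 hu) hu
      rw [hg0] at this
      exact this
    · have hmg : AntitoneOn g (Set.Iic 0) := by
        refine antitoneOn_of_deriv_nonpos (convex_Iic 0)
          (fun v _ => (hdg v).differentiableAt.continuousAt.continuousWithinAt)
          (fun v _ => (hdg v).differentiableAt.differentiableWithinAt) ?_
        intro v hv
        rw [(hdg v).deriv]
        rw [interior_Iic] at hv
        have := hmono (le_of_lt hv)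
        rw [hg'0] at this
        exact this
      have := hmg (Set.mem_Iic.2 hu) (Set.self_mem_Iic) hu
      rw [hg0] at this
      exact this
  have : L u ≤ u ^ 2 / 8 := by
    have : 0 ≤ u ^ 2 / 8 - L u := key
    linarith
  simp only [hL] at this
  linarith

lemma hoeffding_mgf {Ω : Type*} [MeasurableSpace Ω] (P : Measure Ω) [IsProbabilityMeasure P]
    (Y : Ω → ℝ) (hY : Measurable Y) (a b : ℝ) (hab : a ≤ b)
    (hbdd : ∀ᵐ ω ∂P, Y ω ∈ Set.Icc a b) (hmean : ∫ ω, Y ω ∂P = 0) (t : ℝ) :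
    ∫ ω, Real.exp (t * Y ω) ∂P ≤ Real.exp (t ^ 2 * (b - a) ^ 2 / 8) := by
  have hYint : Integrable Y P := by
    refine Integrable.mono' (integrable_const (max |a| |b|)) hY.aestronglyMeasurable ?_
    filter_upwards [hbdd] with ω hω
    exact abs_le_max_abs_abs hω.1 hω.2
  have ha0 : a ≤ 0 := by
    have h1 : ∫ _ω, a ∂P ≤ ∫ ω, Y ω ∂P :=
      integral_mono_ae (integrable_const a) hYint (by filter_upwards [hbdd] with ω hω using hω.1)
    simpa [hmean] using h1
  have hb0 : 0 ≤ b := by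
    have h1 : ∫ ω, Y ω ∂P ≤ ∫ _ω, b ∂P :=
      integral_mono_ae hYint (integrable_const b) (by filter_upwards [hbdd] with ω hω using hω.2)
    simpa [hmean] using h1
  have hexpint : Integrable (fun ω => Real.exp (t * Y ω)) P := by
    refine Integrable.mono' (integrable_const (Real.exp (|t| * max |a| |b|)))
      (Real.measurable_exp.comp (hY.const_mul t)).aestronglyMeasurable ?_
    filter_upwards [hbdd] with ω hω
    rw [Real.norm_eq_abs, abs_of_pos (Real.exp_pos _)]
    apply Real.exp_le_exp.2
    calc t * Y ω ≤ |t * Y ω| := le_abs_self _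
      _ = |t| * |Y ω| := abs_mul _ _
      _ ≤ |t| * max |a| |b| := by
          exact mul_le_mul_of_nonneg_left (abs_le_max_abs_abs hω.1 hω.2) (abs_nonneg t)
  rcases eq_or_lt_of_le hab with heq | hlt
  · -- a = b, hence a = b = 0 and Y = 0 a.e.
    have ha : a = 0 := le_antisymm ha0 (heq ▸ hb0)
    have hY0 : ∀ᵐ ω ∂P, Real.exp (t * Y ω) = 1 := by
      filter_upwards [hbdd] with ω hω
      have : Y ω = 0 := le_antisymm (by simpa [← heq, ha] using hω.2) (by simpa [ha] using hω.1)
      simp [this]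
    rw [integral_congr_ae hY0]
    simp only [integral_const, probReal_univ, smul_eq_mul, one_mul]
    exact Real.one_le_exp (by positivity)
  · have hba : (0:ℝ) < b - a := sub_pos.2 hlt
    set e1 := Real.exp (t * a)
    set e2 := Real.exp (t * b)
    set c : ℝ := (b * e1 - a * e2) / (b - a) with hc
    set d : ℝ := (e2 - e1) / (b - a) with hd
    have hconv : ∀ᵐ ω ∂P, Real.exp (t * Y ω) ≤ c + d * Y ω := by
      filter_upwards [hbdd] with ω hω
      set y := Y ω
      have h1 : (0:ℝ) ≤ (b - y) / (b - a) := div_nonneg (by linarith [hω.2]) hba.le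
      have h2 : (0:ℝ) ≤ (y - a) / (b - a) := div_nonneg (by linarith [hω.1]) hba.le
      have hsum : (b - y) / (b - a) + (y - a) / (b - a) = 1 := by field_simp; ring
      have hcv := convexOn_exp.2 (Set.mem_univ (t * a)) (Set.mem_univ (t * b)) h1 h2 hsum
      have harg : (b - y) / (b - a) * (t * a) + (y - a) / (b - a) * (t * b) = t * y := by
        field_simp; ring
      simp only [smul_eq_mul] at hcv
      rw [harg] at hcv
      have key : ∀ E1 E2 : ℝ, (b - y)/(b-a)*E1 + (y-a)/(b-a)*E2
          = (b*E1 - a*E2)/(b-a) + (E2-E1)/(b-a)*y := by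
        intro E1 E2
        field_simp
        ring
      have hrhs : (b - y) / (b - a) * Real.exp (t*a) + (y - a) / (b - a) * Real.exp (t*b)
          = c + d * y := by
        rw [hc, hd, key]
      calc Real.exp (t * y) ≤ _ := hcv
        _ = c + d * y := hrhs
    have hlin : Integrable (fun ω => c + d * Y ω) P :=
      (integrable_const c).add (hYint.const_mul d)
    have hstep : ∫ ω, Real.exp (t * Y ω) ∂P ≤ c := by
      have h2 := integral_mono_ae hexpint hlin hconv
      rw [integral_add (integrable_const c) (hYint.const_mul d), integral_const,
        integral_const_mul, hmean, probReal_univ] at h2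
      simpa using h2
    -- now c ≤ exp (t^2 (b-a)^2/8)
    refine hstep.trans ?_
    set p : ℝ := -a / (b - a) with hp
    set u : ℝ := t * (b - a) with hu
    have hp0 : 0 ≤ p := div_nonneg (by linarith) hba.le
    have hp1 : p ≤ 1 := by rw [hp, div_le_one hba]; linarith
    have hlog := log_mgf_bound p hp0 hp1 u
    have hppos := hsum_pos p hp0 hp1 u
    have hle : 1 - p + p * Real.exp u ≤ Real.exp (p * u + u ^ 2 / 8) :=
      (Real.log_le_iff_le_exp hppos).1 hlog
    have he2 : e2 = e1 * Real.exp u := by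
      show Real.exp (t * b) = Real.exp (t * a) * Real.exp u; rw [← Real.exp_add]; congr 1; rw [hu]; ring
    have hceq : c = e1 * (1 - p + p * Real.exp u) := by
      rw [hc, he2, hp]
      field_simp
      ring
    have hpu : t * a + p * u = 0 := by
      rw [hp, hu]; field_simp; ring
    calc c = e1 * (1 - p + p * Real.exp u) := hceq
      _ ≤ e1 * Real.exp (p * u + u ^ 2 / 8) := by
          exact mul_le_mul_of_nonneg_left hle (Real.exp_nonneg _)
      _ = Real.exp (t * a + (p * u + u ^ 2 / 8)) := by rw [← Real.exp_add]
      _ = Real.exp (u ^ 2 / 8) := by rw [show t * a + (p * u + u ^ 2 / 8) = (t*a + p*u) + u^2/8 by ring, hpu, zero_add]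
      _ = Real.exp (t ^ 2 * (b - a) ^ 2 / 8) := by rw [hu]; congr 1; ring

section aux
variable {Ω : Type*}

/-- auxiliary: the individual exponential factors -/
noncomputable def auxZ (t μ x : ℝ) (X : ℕ → Ω → ℝ) (i : ℕ) (ω : Ω) : ℝ :=
  Real.exp (t * (X i ω - μ - x))

/-- auxiliary: the exponential supermartingale -/
noncomputable def auxG (t μ x : ℝ) (X : ℕ → Ω → ℝ) (k : ℕ) (ω : Ω) : ℝ :=
  ∏ i ∈ Finset.range k, auxZ t μ x X i ω

/-- auxiliary: the stopped process -/
noncomputable def auxU (t μ x : ℝ) (X : ℕ → Ω → ℝ) (n : ℕ) : ℕ → Ω → ℝ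
  | 0 => auxG t μ x X n
  | (m+1) => fun ω => auxU t μ x X n m ω +
      Set.indicator {ω' | ∀ j ∈ Finset.Ico n (n+m+1), auxG t μ x X j ω' ≤ 1}
        (fun ω' => auxG t μ x X (n+m+1) ω' - auxG t μ x X (n+m) ω') ω

end aux

lemma one_sided {Ω : Type*} [MeasurableSpace Ω] (P : Measure Ω) [IsProbabilityMeasure P]
    (X : ℕ → Ω → ℝ) (hmeas : ∀ i, Measurable (X i))
    (hindep : iIndepFun X P)
    (A B : ℝ) (hAB : A < B) (hbdd : ∀ i, ∀ᵐ ω ∂P, X i ω ∈ Set.Icc A B)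
    (μ : ℝ) (hmean : ∀ i, ∫ ω, X i ω ∂P = μ)
    (n : ℕ) (x : ℝ) (hx : 0 < x) :
    P {ω | ∃ k, n ≤ k ∧ (k : ℝ) * (μ + x) < ∑ i ∈ Finset.range k, X i ω} ≤
      ENNReal.ofReal ((Real.exp (-2 * x ^ 2 / (B - A) ^ 2)) ^ n) := by
  have hc : (0:ℝ) < B - A := sub_pos.2 hAB
  set c : ℝ := B - A with hcdef
  set t : ℝ := 4 * x / c ^ 2 with htdef
  have ht : 0 < t := by positivity
  set ρ : ℝ := Real.exp (-2 * x ^ 2 / c ^ 2) with hρdef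
  have hρ0 : 0 < ρ := Real.exp_pos _
  have hρ1 : ρ ≤ 1 := by
    rw [hρdef]
    apply Real.exp_le_one_iff.2
    have : (0:ℝ) < c ^ 2 := by positivity
    apply div_nonpos_of_nonpos_of_nonneg <;> nlinarith
  set Z := auxZ t μ x X with hZdef
  set G := auxG t μ x X with hGdef
  set K : ℝ := Real.exp (t * (B - μ - x)) with hKdef
  set M : ℝ := max 1 K with hMdef
  have hM1 : (1:ℝ) ≤ M := le_max_left _ _
  have hM0 : (0:ℝ) < M := lt_of_lt_of_le one_pos hM1
  -- measurability
  have hZmeas : ∀ i, Measurable (Z i) := fun i =>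
    Real.measurable_exp.comp ((((hmeas i).sub measurable_const).sub measurable_const).const_mul t)
  have hGmeas : ∀ k, Measurable (G k) :=
    fun k => Finset.measurable_prod _ (fun i _ => hZmeas i)
  have hZpos : ∀ i ω, 0 < Z i ω := fun i ω => Real.exp_pos _
  have hGpos : ∀ k ω, 0 < G k ω := fun k ω => Finset.prod_pos (fun i _ => hZpos i ω)
  -- a.e. bounds
  have hbddall : ∀ᵐ ω ∂P, ∀ i, X i ω ∈ Set.Icc A B := ae_all_iff.2 hbdd
  have hZleM : ∀ ω, (∀ i, X i ω ∈ Set.Icc A B) → ∀ i, Z i ω ≤ M := by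
    intro ω hω i
    refine le_trans ?_ (le_max_right 1 K)
    rw [hZdef, hKdef]
    simp only [auxZ]
    apply Real.exp_le_exp.2
    have := (hω i).2
    nlinarith
  have hGleM : ∀ ω, (∀ i, X i ω ∈ Set.Icc A B) → ∀ k, G k ω ≤ M ^ k := by
    intro ω hω k
    calc G k ω ≤ ∏ _i ∈ Finset.range k, M :=
          Finset.prod_le_prod (fun i _ => (hZpos i ω).le) (fun i _ => hZleM ω hω i)
      _ = M ^ k := by rw [Finset.prod_const, Finset.card_range]
  -- integrability
  have hGint : ∀ k, Integrable (G k) P := by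
    intro k
    refine Integrable.mono' (integrable_const (M ^ k)) (hGmeas k).aestronglyMeasurable ?_
    filter_upwards [hbddall] with ω hω
    rw [Real.norm_eq_abs, abs_of_pos (hGpos k ω)]
    exact hGleM ω hω k
  have hZint : ∀ i, Integrable (Z i) P := by
    intro i
    refine Integrable.mono' (integrable_const M) (hZmeas i).aestronglyMeasurable ?_
    filter_upwards [hbddall] with ω hω
    rw [Real.norm_eq_abs, abs_of_pos (hZpos i ω)]
    exact hZleM ω hω i
  have hXint : ∀ i, Integrable (X i) P := by
    intro i
    refine Integrable.mono' (integrable_const (max |A| |B|)) (hmeas i).aestronglyMeasurable ?_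
    filter_upwards [hbdd i] with ω hω
    exact abs_le_max_abs_abs hω.1 hω.2
  -- the mgf bound
  have hEZ : ∀ i, ∫ ω, Z i ω ∂P ≤ ρ := by
    intro i
    have hmean' : ∫ ω, (X i ω - μ) ∂P = 0 := by
      rw [integral_sub (hXint i) (integrable_const μ), hmean i, integral_const]
      simp
    have hb' : ∀ᵐ ω ∂P, X i ω - μ ∈ Set.Icc (A - μ) (B - μ) := by
      filter_upwards [hbdd i] with ω hω
      exact ⟨by linarith [hω.1], by linarith [hω.2]⟩
    have hhoef := hoeffding_mgf P (fun ω => X i ω - μ) ((hmeas i).sub measurable_const)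
      (A - μ) (B - μ) (by linarith) hb' hmean' t
    have hZeq : ∀ ω, Z i ω = Real.exp (-(t * x)) * Real.exp (t * (X i ω - μ)) := by
      intro ω
      rw [hZdef]
      simp only [auxZ]
      rw [← Real.exp_add]
      congr 1
      ring
    calc ∫ ω, Z i ω ∂P = Real.exp (-(t*x)) * ∫ ω, Real.exp (t * (X i ω - μ)) ∂P := by
          rw [← integral_const_mul]
          exact integral_congr_ae (Filter.Eventually.of_forall hZeq)
      _ ≤ Real.exp (-(t*x)) * Real.exp (t ^ 2 * ((B - μ) - (A - μ)) ^ 2 / 8) := by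
          apply mul_le_mul_of_nonneg_left hhoef (Real.exp_nonneg _)
      _ = ρ := by
          rw [← Real.exp_add, hρdef]
          congr 1
          have : (B - μ) - (A - μ) = c := by rw [hcdef]; ring
          rw [this, htdef]
          field_simp
          ring
  have hEZ0 : ∀ i, 0 ≤ ∫ ω, Z i ω ∂P :=
    fun i => integral_nonneg (fun ω => (hZpos i ω).le)
  -- master independence lemma
  have master : ∀ (k : ℕ) (W : Ω → ℝ) (φ : (ℕ → ℝ) → ℝ), Measurable φ →
      (∀ ω, φ (fun i => if h : i ∈ Finset.range k then X i ω else 0) = W ω) →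
      IndepFun W (Z k) P := by
    intro k W φ hφ hWeq
    have h := hindep.indepFun_finset (Finset.range k) {k} (by simp) hmeas
    have he : Measurable (fun (v : ↥(Finset.range k) → ℝ) (i : ℕ) =>
        if h : i ∈ Finset.range k then v ⟨i, h⟩ else 0) := by
      apply measurable_pi_lambda
      intro i
      by_cases hik : i ∈ Finset.range k
      · simp only [dif_pos hik]
        exact measurable_pi_apply _
      · simp only [dif_neg hik]
        exact measurable_const
    have hψ : Measurable (fun (v : ↥({k} : Finset ℕ) → ℝ) =>
        Real.exp (t * (v ⟨k, Finset.mem_singleton_self k⟩ - μ - x))) :=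
      Real.measurable_exp.comp (by fun_prop)
    have h2 := h.comp (hφ.comp he) hψ
    refine h2.congr (Filter.Eventually.of_forall fun ω => ?_)
      (Filter.Eventually.of_forall fun ω => rfl)
    exact hWeq ω
  -- expectation of G n
  have hEG : ∀ k, 0 ≤ ∫ ω, G k ω ∂P ∧ ∫ ω, G k ω ∂P ≤ ρ ^ k := by
    intro k
    constructor
    · exact integral_nonneg (fun ω => (hGpos k ω).le)
    · induction k with
      | zero =>
        have : G 0 = fun _ => (1:ℝ) := by
          funext ω; rw [hGdef]; simp [auxG]
        rw [this]
        simp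
      | succ k ih =>
        have hsplit : G (k+1) = fun ω => G k ω * Z k ω := by
          funext ω
          rw [hGdef]
          exact Finset.prod_range_succ _ _
        have hind : IndepFun (G k) (Z k) P := by
          refine master k (G k) (fun f => ∏ i ∈ Finset.range k,
            Real.exp (t * (f i - μ - x))) ?_ ?_
          · exact Finset.measurable_prod _ (fun i _ =>
              Real.measurable_exp.comp (by fun_prop : Measurable fun f : ℕ → ℝ => t * (f i - μ - x)))
          · intro ω
            rw [hGdef]
            apply Finset.prod_congr rfl
            intro i hi
            simp [auxZ, hi]
        have hmul : ∫ ω, G (k+1) ω ∂P = (∫ ω, G k ω ∂P) * ∫ ω, Z k ω ∂P := by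
          rw [hsplit]
          exact hind.integral_mul_eq_mul_integral (hGmeas k).aestronglyMeasurable (hZmeas k).aestronglyMeasurable
        rw [hmul, pow_succ]
        exact mul_le_mul ih (hEZ k) (hEZ0 k) (pow_nonneg hρ0.le k)
  -- the stopped process
  set U := auxU t μ x X n with hUdef
  set setC : ℕ → Set Ω := fun m => {ω | ∀ j ∈ Finset.Ico n (n+m), G j ω ≤ 1} with hsetCdef
  have hUs : ∀ m ω, U (m+1) ω = U m ω +
      Set.indicator (setC (m+1)) (fun ω' => G (n+m+1) ω' - G (n+m) ω') ω := by
    intro m ω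
    rfl
  have hCmono : ∀ m ω, ω ∈ setC (m+1) → ω ∈ setC m := by
    intro m ω hC j hj
    refine hC j ?_
    simp only [Finset.mem_Ico] at hj ⊢
    omega
  have hA : ∀ m ω, ω ∈ setC m → U m ω = G (n+m) ω := by
    intro m
    induction m with
    | zero => intro ω _; rfl
    | succ m ih =>
      intro ω hC
      rw [hUs, Set.indicator_of_mem hC, ih ω (hCmono m ω hC)]
      ring_nf
  have hUnonneg : ∀ m ω, 0 ≤ U m ω := by
    intro m
    induction m with
    | zero => intro ω; exact (hGpos n ω).le
    | succ m ih =>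
      intro ω
      by_cases hC : ω ∈ setC (m+1)
      · rw [hUs, Set.indicator_of_mem hC, hA m ω (hCmono m ω hC)]
        have := hGpos (n+m+1) ω
        linarith
      · rw [hUs, Set.indicator_of_notMem hC]
        simpa using ih ω
  have hUhit : ∀ m ω, (∃ j, n ≤ j ∧ j ≤ n+m ∧ 1 < G j ω) → 1 ≤ U m ω := by
    intro m
    induction m with
    | zero =>
      rintro ω ⟨j, hj1, hj2, hj3⟩
      have : j = n := by omega
      subst this
      exact le_of_lt hj3
    | succ m ih =>
      rintro ω ⟨j, hj1, hj2, hj3⟩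
      by_cases hC : ω ∈ setC (m+1)
      · have hjeq : j = n+m+1 := by
          by_contra hne
          have hjm : j ∈ Finset.Ico n (n+(m+1)) := by
            simp only [Finset.mem_Ico]; omega
          exact absurd (hC j hjm) (not_le.2 hj3)
        rw [hUs, Set.indicator_of_mem hC, hA m ω (hCmono m ω hC)]
        rw [hjeq] at hj3
        linarith
      · rw [hUs, Set.indicator_of_notMem hC]
        simp only [hsetCdef, Set.mem_setOf_eq, not_forall] at hC
        obtain ⟨j', hj'1, hj'2⟩ := hC
        simp only [Finset.mem_Ico] at hj'1
        have h1 : 1 ≤ U m ω := ih ω ⟨j', hj'1.1, by omega, not_le.1 hj'2⟩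
        linarith
  have hsetCmeas : ∀ m, MeasurableSet (setC m) := by
    intro m
    have : setC m = ⋂ j ∈ Finset.Ico n (n+m), {ω | G j ω ≤ 1} := by
      ext ω; simp [hsetCdef]
    rw [this]
    exact MeasurableSet.biInter (Finset.Ico n (n+m) : Finset ℕ).countable_toSet
      (fun j _ => measurableSet_le (hGmeas j) measurable_const)
  have hUmeas : ∀ m, Measurable (U m) := by
    intro m
    induction m with
    | zero => exact hGmeas n
    | succ m ih =>
      have : U (m+1) = fun ω => U m ω +
          Set.indicator (setC (m+1)) (fun ω' => G (n+m+1) ω' - G (n+m) ω') ω :=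
        funext (hUs m)
      rw [this]
      exact ih.add (((hGmeas (n+m+1)).sub (hGmeas (n+m))).indicator (hsetCmeas (m+1)))
  have hUle : ∀ ω, (∀ i, X i ω ∈ Set.Icc A B) → ∀ m, U m ω ≤ M ^ (n+m) := by
    intro ω hω m
    induction m with
    | zero => exact hGleM ω hω n
    | succ m ih =>
      by_cases hC : ω ∈ setC (m+1)
      · rw [hUs, Set.indicator_of_mem hC, hA m ω (hCmono m ω hC)]
        have := hGleM ω hω (n+m+1)
        have heq : n + (m+1) = n + m + 1 := by omega
        rw [heq]
        linarith
      · rw [hUs, Set.indicator_of_notMem hC]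
        have : M ^ (n+m) ≤ M ^ (n+(m+1)) := pow_le_pow_right₀ hM1 (by omega)
        simpa using le_trans ih this
  have hUint : ∀ m, Integrable (U m) P := by
    intro m
    refine Integrable.mono' (integrable_const (M ^ (n+m))) (hUmeas m).aestronglyMeasurable ?_
    filter_upwards [hbddall] with ω hω
    rw [Real.norm_eq_abs, abs_of_nonneg (hUnonneg m ω)]
    exact hUle ω hω m
  -- the increments
  set W : ℕ → Ω → ℝ := fun m => Set.indicator (setC (m+1)) (G (n+m)) with hWdef
  have hWmeas : ∀ m, Measurable (W m) := fun m => (hGmeas (n+m)).indicator (hsetCmeas (m+1))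
  have hWnonneg : ∀ m ω, 0 ≤ W m ω := by
    intro m ω
    simp only [hWdef]
    exact Set.indicator_nonneg (fun ω' _ => (hGpos (n+m) ω').le) ω
  have hWle : ∀ ω, (∀ i, X i ω ∈ Set.Icc A B) → ∀ m, W m ω ≤ M ^ (n+m) := by
    intro ω hω m
    simp only [hWdef]
    by_cases hC : ω ∈ setC (m+1)
    · rw [Set.indicator_of_mem hC]
      exact hGleM ω hω (n+m)
    · rw [Set.indicator_of_notMem hC]
      positivity
  have hWint : ∀ m, Integrable (W m) P := by
    intro m
    refine Integrable.mono' (integrable_const (M ^ (n+m))) (hWmeas m).aestronglyMeasurable ?_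
    filter_upwards [hbddall] with ω hω
    rw [Real.norm_eq_abs, abs_of_nonneg (hWnonneg m ω)]
    exact hWle ω hω m
  have hGsucc : ∀ k ω, G (k+1) ω = G k ω * Z k ω := by
    intro k ω
    rw [hGdef]
    exact Finset.prod_range_succ _ _
  have hUdiff : ∀ m ω, U (m+1) ω = U m ω + W m ω * (Z (n+m) ω - 1) := by
    intro m ω
    rw [hUs]; simp only [hWdef]
    by_cases hC : ω ∈ setC (m+1)
    · rw [Set.indicator_of_mem hC, Set.indicator_of_mem hC, hGsucc (n+m) ω]
      ring
    · rw [Set.indicator_of_notMem hC, Set.indicator_of_notMem hC]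
      ring
  -- independence of W m and Z (n+m)
  have hFG : ∀ (k j : ℕ), j ≤ k → ∀ ω,
      (∏ i ∈ Finset.range j,
        Real.exp (t * ((if h : i ∈ Finset.range k then X i ω else 0) - μ - x))) = G j ω := by
    intro k j hjk ω
    rw [hGdef]
    apply Finset.prod_congr rfl
    intro i hi
    have hik : i ∈ Finset.range k := by
      simp only [Finset.mem_range] at hi ⊢
      omega
    simp [auxZ, hik]
  have hWind : ∀ m, IndepFun (W m) (Z (n+m)) P := by
    intro m
    set F : ℕ → (ℕ → ℝ) → ℝ :=
      fun j f => ∏ i ∈ Finset.range j, Real.exp (t * (f i - μ - x)) with hFdef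
    have hFmeas : ∀ j, Measurable (F j) := fun j =>
      Finset.measurable_prod _ (fun i _ =>
        Real.measurable_exp.comp
          (by fun_prop : Measurable fun f : ℕ → ℝ => t * (f i - μ - x)))
    set SF : Set (ℕ → ℝ) := {f | ∀ j ∈ Finset.Ico n (n+m+1), F j f ≤ 1} with hSFdef
    have hSFmeas : MeasurableSet SF := by
      have : SF = ⋂ j ∈ Finset.Ico n (n+m+1), {f | F j f ≤ 1} := by
        ext f; simp [hSFdef]
      rw [this]
      exact MeasurableSet.biInter (Finset.Ico n (n+m+1) : Finset ℕ).countable_toSet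
        (fun j _ => measurableSet_le (hFmeas j) measurable_const)
    refine master (n+m) (W m) (Set.indicator SF (F (n+m))) ((hFmeas (n+m)).indicator hSFmeas) ?_
    intro ω
    set f0 : ℕ → ℝ := fun i => if h : i ∈ Finset.range (n+m) then X i ω else 0 with hf0def
    have hiff : f0 ∈ SF ↔ ω ∈ setC (m+1) := by
      simp only [hSFdef, hsetCdef, Set.mem_setOf_eq]
      constructor
      · intro H j hj
        have hjle : j ≤ n+m := by
          simp only [Finset.mem_Ico] at hj
          omega
        have hj' : j ∈ Finset.Ico n (n+m+1) := by
          simp only [Finset.mem_Ico] at hj ⊢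
          omega
        rw [← hFG (n+m) j hjle ω]
        exact H j hj'
      · intro H j hj
        have hjle : j ≤ n+m := by
          simp only [Finset.mem_Ico] at hj
          omega
        have hj' : j ∈ Finset.Ico n (n+(m+1)) := by
          simp only [Finset.mem_Ico] at hj ⊢
          omega
        have := H j hj'
        rw [show F j f0 = G j ω from hFG (n+m) j hjle ω]
        exact this
    simp only [hWdef]
    by_cases hC : ω ∈ setC (m+1)
    · rw [Set.indicator_of_mem (hiff.2 hC), Set.indicator_of_mem hC]
      exact hFG (n+m) (n+m) le_rfl ω
    · rw [Set.indicator_of_notMem (fun h => hC (hiff.1 h)), Set.indicator_of_notMem hC]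
  -- expectation of U m
  have hWZint : ∀ m, Integrable (fun ω => W m ω * Z (n+m) ω) P := by
    intro m
    refine Integrable.mono' (integrable_const (M ^ (n+m) * M))
      ((hWmeas m).mul (hZmeas (n+m))).aestronglyMeasurable ?_
    filter_upwards [hbddall] with ω hω
    rw [Real.norm_eq_abs, abs_mul, abs_of_nonneg (hWnonneg m ω),
      abs_of_pos (hZpos (n+m) ω)]
    exact mul_le_mul (hWle ω hω m) (hZleM ω hω (n+m)) (hZpos (n+m) ω).le (by positivity)
  have hEU : ∀ m, ∫ ω, U m ω ∂P ≤ ρ ^ n := by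
    intro m
    induction m with
    | zero => exact (hEG n).2
    | succ m ih =>
      have heq : (fun ω => U (m+1) ω) = fun ω => U m ω + (W m ω * Z (n+m) ω - W m ω) := by
        funext ω
        rw [hUdiff m ω]
        ring
      have hint2 : Integrable (fun ω => W m ω * Z (n+m) ω - W m ω) P :=
        (hWZint m).sub (hWint m)
      have hsplit : ∫ ω, U (m+1) ω ∂P =
          (∫ ω, U m ω ∂P) + ((∫ ω, W m ω * Z (n+m) ω ∂P) - ∫ ω, W m ω ∂P) := by
        rw [show (∫ ω, U (m+1) ω ∂P) = ∫ ω, (U m ω + (W m ω * Z (n+m) ω - W m ω)) ∂P from by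
          rw [← heq]]
        rw [integral_add (hUint m) hint2, integral_sub (hWZint m) (hWint m)]
      have hprod : ∫ ω, W m ω * Z (n+m) ω ∂P = (∫ ω, W m ω ∂P) * ∫ ω, Z (n+m) ω ∂P :=
        (hWind m).integral_mul_eq_mul_integral (hWmeas m).aestronglyMeasurable
          (hZmeas (n+m)).aestronglyMeasurable
      have hWpos : 0 ≤ ∫ ω, W m ω ∂P := integral_nonneg (fun ω => hWnonneg m ω)
      have hZ1 : ∫ ω, Z (n+m) ω ∂P ≤ 1 := le_trans (hEZ (n+m)) hρ1
      have : (∫ ω, W m ω ∂P) * ∫ ω, Z (n+m) ω ∂P ≤ (∫ ω, W m ω ∂P) * 1 :=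
        mul_le_mul_of_nonneg_left hZ1 hWpos
      rw [hsplit, hprod]
      linarith
  -- relating the event to G
  have hGiff : ∀ (k : ℕ) (ω : Ω), ((k : ℝ) * (μ + x) < ∑ i ∈ Finset.range k, X i ω) ↔ 1 < G k ω := by
    intro k ω
    have hGexp : G k ω = Real.exp (∑ i ∈ Finset.range k, t * (X i ω - μ - x)) := by
      rw [hGdef, Real.exp_sum]
      rfl
    have hsum : (∑ i ∈ Finset.range k, t * (X i ω - μ - x)) =
        t * ((∑ i ∈ Finset.range k, X i ω) - (k : ℝ) * (μ + x)) := by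
      rw [mul_sub, Finset.mul_sum]
      rw [show t * ((k : ℝ) * (μ + x)) = ∑ _i ∈ Finset.range k, t * (μ + x) from by
        rw [Finset.sum_const, Finset.card_range, nsmul_eq_mul]; ring]
      rw [← Finset.sum_sub_distrib]
      apply Finset.sum_congr rfl
      intro i _
      ring
    rw [hGexp, Real.one_lt_exp_iff, hsum]
    constructor
    · intro h
      have : 0 < (∑ i ∈ Finset.range k, X i ω) - (k : ℝ) * (μ + x) := by linarith
      exact mul_pos ht this
    · intro h
      nlinarith
  -- the events
  set Ev : ℕ → Set Ω := fun m => {ω | ∃ j, n ≤ j ∧ j ≤ n+m ∧ 1 < G j ω} with hEvdef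
  have hEvmeas : ∀ m, MeasurableSet (Ev m) := by
    intro m
    have : Ev m = ⋃ j ∈ Finset.Icc n (n+m), {ω | 1 < G j ω} := by
      ext ω
      simp [hEvdef, Finset.mem_Icc]
      tauto
    rw [this]
    exact MeasurableSet.biUnion (Finset.Icc n (n+m) : Finset ℕ).countable_toSet
      (fun j _ => measurableSet_lt measurable_const (hGmeas j))
  have hEvmono : Monotone Ev := by
    intro m m' hmm ω hω
    obtain ⟨j, h1, h2, h3⟩ := hω
    exact ⟨j, h1, by omega, h3⟩
  have hsub : {ω | ∃ k, n ≤ k ∧ (k : ℝ) * (μ + x) < ∑ i ∈ Finset.range k, X i ω} ⊆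
      ⋃ m, Ev m := by
    intro ω hω
    obtain ⟨k, hk1, hk2⟩ := hω
    refine Set.mem_iUnion.2 ⟨k - n, k, hk1, by omega, (hGiff k ω).1 hk2⟩
  have hPEv : ∀ m, P (Ev m) ≤ ENNReal.ofReal (ρ ^ n) := by
    intro m
    rw [ENNReal.le_ofReal_iff_toReal_le (measure_ne_top P _) (by positivity)]
    have h1 : (P (Ev m)).toReal = ∫ ω, Set.indicator (Ev m) 1 ω ∂P :=
      (integral_indicator_one (hEvmeas m)).symm
    rw [h1]
    refine le_trans (integral_mono ((integrable_const (1:ℝ)).indicator (hEvmeas m)) (hUint m) ?_)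
      (hEU m)
    intro ω
    by_cases hω : ω ∈ Ev m
    · rw [Set.indicator_of_mem hω]
      exact hUhit m ω hω
    · rw [Set.indicator_of_notMem hω]
      exact hUnonneg m ω
  calc P {ω | ∃ k, n ≤ k ∧ (k : ℝ) * (μ + x) < ∑ i ∈ Finset.range k, X i ω}
      ≤ P (⋃ m, Ev m) := measure_mono hsub
    _ = ⨆ m, P (Ev m) := Directed.measure_iUnion hEvmono.directed_le
    _ ≤ ENNReal.ofReal (ρ ^ n) := iSup_le hPEv


/-- Supremal extension of Hoeffding's inequality:
`P(sup_{k ≥ n} |X̄_k - μ| > x) ≤ 2 exp(-2 n x² / (B - A)²)`. -/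
theorem stmt_6 {Ω : Type*} [MeasurableSpace Ω] (P : Measure Ω) [IsProbabilityMeasure P]
    (X : ℕ → Ω → ℝ) (hmeas : ∀ i, Measurable (X i))
    (hindep : iIndepFun X P)
    (hident : ∀ i, Measure.map (X i) P = Measure.map (X 0) P)
    (A B : ℝ) (hAB : A < B) (hbdd : ∀ i, ∀ᵐ ω ∂P, X i ω ∈ Set.Icc A B)
    (μ : ℝ) (hμ : μ = ∫ ω, X 0 ω ∂P)
    (Xbar : ℕ → Ω → ℝ)
    (hXbar : ∀ k ω, Xbar k ω = (1 / (k : ℝ)) * ∑ i ∈ Finset.range k, X i ω)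
    (n : ℕ) (hn : 1 ≤ n) (x : ℝ) (hx : 0 < x) :
    (P {ω | ∃ k, n ≤ k ∧ x < |Xbar k ω - μ|}).toReal ≤
      2 * Real.exp (-2 * (n : ℝ) * x ^ 2 / (B - A) ^ 2) := by
  have hmean : ∀ i, ∫ ω, X i ω ∂P = μ := by
    intro i
    have h1 : ∫ ω, X i ω ∂P = ∫ y, y ∂(Measure.map (X i) P) :=
      (integral_map (hmeas i).aemeasurable aestronglyMeasurable_id).symm
    have h2 : ∫ ω, X 0 ω ∂P = ∫ y, y ∂(Measure.map (X 0) P) :=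
      (integral_map (hmeas 0).aemeasurable aestronglyMeasurable_id).symm
    rw [h1, hident i, ← h2, ← hμ]
  -- the two one-sided events
  set r : ℝ := (Real.exp (-2 * x ^ 2 / (B - A) ^ 2)) ^ n with hrdef
  have hplus := one_sided P X hmeas hindep A B hAB hbdd μ hmean n x hx
  have hmeas' : ∀ i, Measurable (fun ω => -X i ω) := fun i => (hmeas i).neg
  have hindep' : iIndepFun (fun i ω => -X i ω) P :=
    hindep.comp (fun _ (y : ℝ) => -y) (fun _ => measurable_neg)
  have hbdd' : ∀ i, ∀ᵐ ω ∂P, (fun ω => -X i ω) ω ∈ Set.Icc (-B) (-A) := by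
    intro i
    filter_upwards [hbdd i] with ω hω
    exact ⟨by linarith [hω.2], by linarith [hω.1]⟩
  have hmean' : ∀ i, ∫ ω, (fun ω => -X i ω) ω ∂P = -μ := by
    intro i
    simp only
    rw [integral_neg, hmean i]
  have hminus := one_sided P (fun i ω => -X i ω) hmeas' hindep' (-B) (-A)
    (by linarith) hbdd' (-μ) hmean' n x hx
  rw [show (-A : ℝ) - -B = B - A from by ring] at hminus
  -- inclusion
  have hsub : {ω | ∃ k, n ≤ k ∧ x < |Xbar k ω - μ|} ⊆
      {ω | ∃ k, n ≤ k ∧ (k : ℝ) * (μ + x) < ∑ i ∈ Finset.range k, X i ω} ∪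
      {ω | ∃ k, n ≤ k ∧ (k : ℝ) * (-μ + x) < ∑ i ∈ Finset.range k, -X i ω} := by
    rintro ω ⟨k, hk, habs⟩
    have hk0 : (0:ℝ) < k := by
      have : 1 ≤ k := le_trans hn hk
      exact_mod_cast Nat.lt_of_lt_of_le Nat.zero_lt_one this
    set S : ℝ := ∑ i ∈ Finset.range k, X i ω with hSdef
    have hXb : Xbar k ω = (1 / (k:ℝ)) * S := hXbar k ω
    have hSneg : ∑ i ∈ Finset.range k, -X i ω = -S := by
      rw [hSdef, ← Finset.sum_neg_distrib]
    have hfield : (1 / (k:ℝ)) * S * k = S := by field_simp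
    rcases lt_abs.1 habs with h | h
    · left
      refine ⟨k, hk, ?_⟩
      rw [hXb] at h
      rw [← hSdef]
      nlinarith [hfield]
    · right
      refine ⟨k, hk, ?_⟩
      rw [hXb] at h
      rw [hSneg]
      nlinarith [hfield]
  -- combine
  have hP : P {ω | ∃ k, n ≤ k ∧ x < |Xbar k ω - μ|} ≤ ENNReal.ofReal (r + r) := by
    calc P {ω | ∃ k, n ≤ k ∧ x < |Xbar k ω - μ|} ≤ _ := measure_mono hsub
      _ ≤ P {ω | ∃ k, n ≤ k ∧ (k : ℝ) * (μ + x) < ∑ i ∈ Finset.range k, X i ω} +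
          P {ω | ∃ k, n ≤ k ∧ (k : ℝ) * (-μ + x) < ∑ i ∈ Finset.range k, -X i ω} :=
        measure_union_le _ _
      _ ≤ ENNReal.ofReal r + ENNReal.ofReal r := add_le_add hplus hminus
      _ = ENNReal.ofReal (r + r) := (ENNReal.ofReal_add (by positivity) (by positivity)).symm
  have hfin : r + r = 2 * Real.exp (-2 * (n : ℝ) * x ^ 2 / (B - A) ^ 2) := by
    rw [hrdef, ← Real.exp_nat_mul]
    rw [show (n : ℝ) * (-2 * x ^ 2 / (B - A) ^ 2) = -2 * (n : ℝ) * x ^ 2 / (B - A) ^ 2 from by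
      ring]
    ring
  rw [hfin] at hP
  exact ENNReal.toReal_le_of_le_ofReal (by positivity) hP
end

section
/- Let X₁, X₂, … be i.i.d. with distribution function F, let α ∈ (0,1), suppose the α-quantile q_α = F⁻¹(α) is the unique α-quantile, and let Fₖ⁻¹(α) denote the empirical sample α-quantile based on X₁,…,X_k. Then for every n ∈ ℕ and every x > 0, P(sup_{k ≥ n} |Fₖ⁻¹(α) - q_α| > x) ≤ 2 exp(-2 n d(x)²), where d(x) = min{F(q_α + x) - α, α - F(q_α - x)}. -/
open MeasureTheory ProbabilityTheory Finset Real
open scoped ENNReal NNReal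

/-- Hoeffding's lemma for Bernoulli variables: the mgf bound. -/
lemma bernoulli_mgf (p : ℝ) (hp0 : 0 ≤ p) (hp1 : p ≤ 1) (t : ℝ) :
    (1 - p) * exp (t * p) + p * exp (t * (p - 1)) ≤ exp (t ^ 2 / 8) := by
  set D : ℝ → ℝ := fun u => 1 - p + p * exp u with hDdef
  have hDpos : ∀ u, 0 < D u := by
    intro u
    have hDu : D u = 1 - p + p * exp u := rfl
    rw [hDu]
    rcases le_total (exp u) 1 with hc | hc
    · have h3 : (1 - p) * exp u ≤ (1 - p) * 1 :=
        mul_le_mul_of_nonneg_left hc (by linarith)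
      nlinarith [exp_pos u, mul_nonneg hp0 (exp_pos u).le]
    · have h3 : p * 1 ≤ p * exp u := mul_le_mul_of_nonneg_left hc hp0
      nlinarith [exp_pos u]
  set φ : ℝ → ℝ := fun u => p * exp u / D u with hφdef
  set h : ℝ → ℝ := fun u => log (D u) - p * u with hhdef
  set k : ℝ → ℝ := fun u => u ^ 2 / 8 - h u with hkdef
  set w : ℝ → ℝ := fun u => u / 4 - (φ u - p) with hwdef
  have hDD : ∀ u, HasDerivAt D (p * exp u) u := by
    intro u
    exact ((Real.hasDerivAt_exp u).const_mul p).const_add (1 - p)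
  have hh : ∀ u, HasDerivAt h (φ u - p) u := by
    intro u
    have h1 : HasDerivAt (fun u => log (D u)) (p * exp u / D u) u :=
      (hDD u).log (hDpos u).ne'
    exact (h1.sub ((hasDerivAt_id u).const_mul p)).congr_deriv (by simp [hφdef])
  have hk : ∀ u, HasDerivAt k (w u) u := by
    intro u
    have hq : HasDerivAt (fun v : ℝ => v ^ 2 / 8) (u / 4) u := by
      have h1 := (hasDerivAt_pow 2 u).div_const 8
      refine h1.congr_deriv ?_
      norm_num; ring
    exact hq.sub (hh u)
  have hφ : ∀ u, HasDerivAt φ (p * exp u * (1 - p) / (D u) ^ 2) u := by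
    intro u
    have h1 := ((Real.hasDerivAt_exp u).const_mul p).div (hDD u) (hDpos u).ne'
    refine h1.congr_deriv ?_
    have hDu : D u = 1 - p + p * exp u := rfl
    have hnum : p * exp u * (1 - p) = p * exp u * D u - p * exp u * (p * exp u) := by
      rw [hDu]; ring
    rw [hnum]
  have hw : ∀ u, HasDerivAt w (1 / 4 - p * exp u * (1 - p) / (D u) ^ 2) u := by
    intro u
    have h1 := (((hasDerivAt_id u).div_const 4)).sub ((hφ u).sub_const p)
    exact h1
  have hwderiv_nonneg : ∀ u, 0 ≤ 1 / 4 - p * exp u * (1 - p) / (D u) ^ 2 := by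
    intro u
    have hD2 : 0 < (D u) ^ 2 := pow_pos (hDpos u) 2
    have hDu : D u = 1 - p + p * exp u := rfl
    rw [sub_nonneg, div_le_iff₀ hD2, hDu]
    nlinarith [sq_nonneg (1 - p - p * exp u)]
  have hwmono : Monotone w := by
    apply monotone_of_deriv_nonneg
    · exact fun u => (hw u).differentiableAt
    · intro u; rw [(hw u).deriv]; exact hwderiv_nonneg u
  have hw0 : w 0 = 0 := by
    have hD0 : D 0 = 1 := by simp [hDdef]
    simp [hwdef, hφdef, hD0]
  have hk0 : k 0 = 0 := by
    have hD0 : D 0 = 1 := by simp [hDdef]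
    simp [hkdef, hhdef, hD0]
  have hknonneg : ∀ u, 0 ≤ k u := by
    intro u
    rcases le_total 0 u with hu | hu
    · have hmono : MonotoneOn k (Set.Ici 0) := by
        apply monotoneOn_of_deriv_nonneg (convex_Ici 0)
        · exact (Differentiable.continuous fun v => (hk v).differentiableAt).continuousOn
        · exact fun v _ => (hk v).differentiableAt.differentiableWithinAt
        · intro v hv
          rw [(hk v).deriv]
          rw [interior_Ici] at hv
          calc (0:ℝ) = w 0 := hw0.symm
          _ ≤ w v := hwmono hv.le
      have := hmono Set.self_mem_Ici (Set.mem_Ici.2 hu) hu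
      linarith [hk0]
    · have hmono : AntitoneOn k (Set.Iic 0) := by
        apply antitoneOn_of_deriv_nonpos (convex_Iic 0)
        · exact (Differentiable.continuous fun v => (hk v).differentiableAt).continuousOn
        · exact fun v _ => (hk v).differentiableAt.differentiableWithinAt
        · intro v hv
          rw [(hk v).deriv]
          rw [interior_Iic] at hv
          calc w v ≤ w 0 := hwmono hv.le
          _ = 0 := hw0
      have := hmono (Set.mem_Iic.2 hu) Set.self_mem_Iic hu
      linarith [hk0]
  have hhle : ∀ u, h u ≤ u ^ 2 / 8 := by
    intro u
    have := hknonneg u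
    simp only [hkdef] at this
    linarith
  -- final assembly
  have hLHS : (1 - p) * exp (t * p) + p * exp (t * (p - 1)) = exp (h (-t)) := by
    have h1 : (1 - p) * exp (t * p) + p * exp (t * (p - 1)) = exp (t * p) * D (-t) := by
      have : exp (t * (p - 1)) = exp (t * p) * exp (-t) := by
        rw [← exp_add]; ring_nf
      simp only [hDdef]
      rw [this]; ring
    have h2 : h (-t) = log (D (-t)) + p * t := by simp only [hhdef]; ring
    rw [h1, h2, exp_add, Real.exp_log (hDpos (-t))]
    ring
  rw [hLHS]
  have := hhle (-t)
  calc exp (h (-t)) ≤ exp ((-t) ^ 2 / 8) := exp_le_exp.2 this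
  _ = exp (t ^ 2 / 8) := by rw [neg_pow]; ring_nf

/-- Ville's maximal inequality for nonnegative supermartingales (tail form). -/
lemma ville_ineq {Ω : Type*} {m0 : MeasurableSpace Ω} {P : Measure Ω} [IsProbabilityMeasure P]
    {𝒢 : Filtration ℕ m0} {f : ℕ → Ω → ℝ} (hf : Supermartingale f 𝒢 P)
    (hnonneg : 0 ≤ f) (m : ℕ) {ε : ℝ} (hε : 0 < ε) :
    P {ω | ∃ j, m ≤ j ∧ ε ≤ f j ω} ≤ ENNReal.ofReal ((∫ ω, f m ω ∂P) / ε) := by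
  have hfmeas : ∀ j, Measurable (f j) :=
    fun j => ((hf.stronglyAdapted j).mono (𝒢.le j)).measurable
  have hint_m_nonneg : 0 ≤ ∫ ω, f m ω ∂P := integral_nonneg (hnonneg m)
  -- finite-horizon bound
  have key : ∀ N, m ≤ N →
      P (⋃ j ∈ Set.Icc m N, {ω | ε ≤ f j ω}) ≤
        ENNReal.ofReal ((∫ ω, f m ω ∂P) / ε) := by
    intro N hmN
    set E : Set Ω := ⋃ j ∈ Set.Icc m N, {ω | ε ≤ f j ω} with hEdef
    have hEmeas : MeasurableSet E := by
      refine MeasurableSet.biUnion ((Set.finite_Icc m N).countable) fun j _ => ?_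
      exact measurableSet_le measurable_const (hfmeas j)
    set τ : Ω → WithTop ℕ := fun ω => (hittingBtwn f (Set.Ici ε) m N ω : ℕ) with hτdef
    have hτst : IsStoppingTime 𝒢 τ :=
      hf.stronglyAdapted.adapted.isStoppingTime_hittingBtwn measurableSet_Ici
    have hτle : ∀ ω, τ ω ≤ N := fun ω => by simp only [hτdef]; exact_mod_cast (hittingBtwn_le ω : hittingBtwn f (Set.Ici ε) m N ω ≤ N)
    have hτge : ∀ ω, m ≤ τ ω := fun ω => by simp only [hτdef]; exact_mod_cast (le_hittingBtwn hmN ω : m ≤ hittingBtwn f (Set.Ici ε) m N ω)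
    -- stopped value is ≥ ε on E
    have hsv_ge : ∀ ω ∈ E, ε ≤ stoppedValue f τ ω := by
      intro ω hω
      simp only [hEdef, Set.mem_iUnion, Set.mem_setOf_eq] at hω
      obtain ⟨j, hj, hεf⟩ := hω
      exact stoppedValue_hittingBtwn_mem (u := f) (s := Set.Ici ε) (n := m) (m := N) ⟨j, hj, hεf⟩
    -- integrability of the stopped value
    have hsv_int : Integrable (stoppedValue f τ) P := by
      have h1 : Integrable (stoppedValue (-f) τ) P :=
        hf.neg.integrable_stoppedValue hτst hτle
      have h2 : stoppedValue f τ = -(stoppedValue (-f) τ) := by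
        funext ω; simp [stoppedValue]
      rw [h2]; exact h1.neg
    -- optional stopping
    have hos : ∫ ω, stoppedValue f τ ω ∂P ≤ ∫ ω, f m ω ∂P := by
      have h1 := hf.neg.expected_stoppedValue_mono (isStoppingTime_const 𝒢 m) hτst
        (fun ω => hτge ω) hτle
      have h2 : stoppedValue (-f) (fun _ => WithTop.some m) = -(f m) := by
        funext ω; simp [stoppedValue]; rfl
      have h3 : stoppedValue (-f) τ = -(stoppedValue f τ) := by
        funext ω; simp [stoppedValue]
      rw [h2, h3] at h1
      simp only [Pi.neg_apply, integral_neg, neg_le_neg_iff] at h1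
      exact h1
    -- Markov step
    have hmarkov : ε * (P E).toReal ≤ ∫ ω in E, stoppedValue f τ ω ∂P :=
      setIntegral_ge_of_const_le_real hEmeas (measure_ne_top P E) hsv_ge hsv_int.integrableOn
    have hle_total : ∫ ω in E, stoppedValue f τ ω ∂P ≤ ∫ ω, stoppedValue f τ ω ∂P := by
      refine setIntegral_le_integral hsv_int ?_
      exact Filter.Eventually.of_forall fun ω => hnonneg _ ω
    have htoReal : (P E).toReal ≤ (∫ ω, f m ω ∂P) / ε := by
      rw [le_div_iff₀ hε]
      calc (P E).toReal * ε = ε * (P E).toReal := by ring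
      _ ≤ ∫ ω in E, stoppedValue f τ ω ∂P := hmarkov
      _ ≤ ∫ ω, stoppedValue f τ ω ∂P := hle_total
      _ ≤ ∫ ω, f m ω ∂P := hos
    rw [ENNReal.le_ofReal_iff_toReal_le (measure_ne_top P E)
      (div_nonneg hint_m_nonneg hε.le)]
    exact htoReal
  -- pass to the limit
  have hunion : {ω | ∃ j, m ≤ j ∧ ε ≤ f j ω} =
      ⋃ N : ℕ, ⋃ j ∈ Set.Icc m (m + N), {ω | ε ≤ f j ω} := by
    ext ω
    simp only [Set.mem_setOf_eq, Set.mem_iUnion, Set.mem_Icc]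
    constructor
    · rintro ⟨j, hj, hεf⟩
      exact ⟨j - m, j, ⟨hj, by omega⟩, hεf⟩
    · rintro ⟨N, j, ⟨hj, _⟩, hεf⟩
      exact ⟨j, hj, hεf⟩
  rw [hunion]
  have hdir : Directed (· ⊆ ·) (fun N : ℕ => ⋃ j ∈ Set.Icc m (m + N), {ω | ε ≤ f j ω}) := by
    refine Monotone.directed_le fun N N' hNN' => ?_
    refine Set.biUnion_subset_biUnion_left ?_
    intro j hj
    simp only [Set.mem_Icc] at hj ⊢
    omega
  rw [hdir.measure_iUnion]
  exact iSup_le fun N => key (m + N) (Nat.le_add_right m N)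

/-- One-sided exponential maximal bound for the product supermartingale built from
indicator variables. -/
lemma one_sided_s7 {Ω : Type*} {m0 : MeasurableSpace Ω} (P : Measure Ω) [IsProbabilityMeasure P]
    (X : ℕ → Ω → ℝ) (hmeas : ∀ i, Measurable (X i))
    (hindep : iIndepFun X P)
    (c p t : ℝ) (hp : ∀ i, (P {ω | X i ω ≤ c}).toReal = p)
    (hp0 : 0 ≤ p) (hp1 : p ≤ 1)
    (n : ℕ) (hn : 1 ≤ n) {ε : ℝ} (hε : 0 < ε) :
    P {ω | ∃ k, n ≤ k ∧ ε ≤ ∏ i ∈ Finset.range k,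
        Real.exp (t * ((if X i ω ≤ c then (1:ℝ) else 0) - p) - t ^ 2 / 8)} ≤
      ENNReal.ofReal (1 / ε) := by
  classical
  -- the factor function
  set g : ℝ → ℝ := fun y => Real.exp (t * ((if y ≤ c then (1:ℝ) else 0) - p) - t ^ 2 / 8)
    with hgdef
  have hite : Measurable fun y : ℝ => (if y ≤ c then (1:ℝ) else 0) :=
    Measurable.ite measurableSet_Iic measurable_const measurable_const
  have hg : Measurable g :=
    Real.measurable_exp.comp (((hite.sub measurable_const).const_mul t).sub measurable_const)
  set G : ℕ → Ω → ℝ := fun i ω => g (X i ω) with hGdef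
  have hGindep : iIndepFun G P :=
    hindep.comp (fun _ => g) (fun _ => hg)
  have hGmeas : ∀ i, Measurable (G i) := fun i => hg.comp (hmeas i)
  have hGsm : ∀ i, StronglyMeasurable (G i) := fun i => (hGmeas i).stronglyMeasurable
  have hGpos : ∀ i ω, 0 < G i ω := fun i ω => Real.exp_pos _
  have hGle : ∀ i ω, G i ω ≤ Real.exp |t| := by
    intro i ω
    apply Real.exp_le_exp.2
    have hd1 : |(if X i ω ≤ c then (1:ℝ) else 0) - p| ≤ 1 := by
      apply abs_le.2; constructor <;> split <;> linarith
    have h2 : t * ((if X i ω ≤ c then (1:ℝ) else 0) - p) ≤ |t| := by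
      calc t * ((if X i ω ≤ c then (1:ℝ) else 0) - p)
          ≤ |t * ((if X i ω ≤ c then (1:ℝ) else 0) - p)| := le_abs_self _
        _ = |t| * |(if X i ω ≤ c then (1:ℝ) else 0) - p| := abs_mul _ _
        _ ≤ |t| * 1 := mul_le_mul_of_nonneg_left hd1 (abs_nonneg t)
        _ = |t| := mul_one _
    nlinarith [sq_nonneg t]
  have hGint : ∀ i, Integrable (G i) P := by
    intro i
    refine Integrable.mono' (integrable_const (Real.exp |t|))
      (hGsm i).aestronglyMeasurable ?_
    exact Filter.Eventually.of_forall fun ω => by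
      rw [Real.norm_eq_abs, abs_of_pos (hGpos i ω)]; exact hGle i ω
  -- expectation of each factor is at most 1
  have hEG : ∀ i, ∫ ω, G i ω ∂P ≤ 1 := by
    intro i
    set A : Set Ω := {ω | X i ω ≤ c} with hAdef
    have hA : MeasurableSet A := hmeas i measurableSet_Iic
    set a : ℝ := Real.exp (t * (1 - p) - t ^ 2 / 8) with hadef
    set b : ℝ := Real.exp (t * (0 - p) - t ^ 2 / 8) with hbdef
    have hsplit : (fun ω => G i ω) =
        (A.indicator fun _ => a) + (Aᶜ.indicator fun _ => b) := by
      funext ω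
      by_cases hω : ω ∈ A
      · have hXc : X i ω ≤ c := hω
        simp [hGdef, hgdef, hadef, Set.indicator_of_mem hω,
          Set.indicator_of_notMem (by simpa using hω : ω ∉ Aᶜ), hXc]
      · have hXc : ¬ X i ω ≤ c := hω
        simp [hGdef, hgdef, hbdef, Set.indicator_of_notMem hω,
          Set.indicator_of_mem (by simpa using hω : ω ∈ Aᶜ), hXc]
    have hPA : (P A).toReal = p := hp i
    have hPAc : (P Aᶜ).toReal = 1 - p := by
      rw [prob_compl_eq_one_sub hA, ENNReal.toReal_sub_of_le prob_le_one ENNReal.one_ne_top,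
        ENNReal.toReal_one, hPA]
    have hint : ∫ ω, G i ω ∂P = p * a + (1 - p) * b := by
      rw [show ∫ ω, G i ω ∂P = ∫ ω, ((A.indicator fun _ => a) +
          (Aᶜ.indicator fun _ => b)) ω ∂P from by rw [← hsplit]]
      simp only [Pi.add_apply]
      rw [integral_add ((integrable_const a).indicator hA)
        ((integrable_const b).indicator hA.compl)]
      rw [integral_indicator_const _ hA, integral_indicator_const _ hA.compl,
        measureReal_def, measureReal_def, hPA, hPAc, smul_eq_mul, smul_eq_mul]
    rw [hint]
    have hmgf := bernoulli_mgf p hp0 hp1 (-t)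
    rw [neg_sq] at hmgf
    have ha' : a = Real.exp (-t * (p - 1)) * Real.exp (-(t ^ 2 / 8)) := by
      rw [hadef, ← Real.exp_add]; ring_nf
    have hb' : b = Real.exp (-t * p) * Real.exp (-(t ^ 2 / 8)) := by
      rw [hbdef, ← Real.exp_add]; ring_nf
    calc p * a + (1 - p) * b
        = ((1 - p) * Real.exp (-t * p) + p * Real.exp (-t * (p - 1))) *
            Real.exp (-(t ^ 2 / 8)) := by rw [ha', hb']; ring
      _ ≤ Real.exp (t ^ 2 / 8) * Real.exp (-(t ^ 2 / 8)) :=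
          mul_le_mul_of_nonneg_right hmgf (Real.exp_pos _).le
      _ = 1 := by rw [← Real.exp_add]; simp
  -- the product process
  set M : ℕ → Ω → ℝ := fun k ω => ∏ i ∈ Finset.range k, G i ω with hMdef
  have hMeqProd : ∀ k, M k = ∏ i ∈ Finset.range k, G i := by
    intro k; funext ω; rw [Finset.prod_apply]
  have hMnonneg : ∀ k ω, 0 ≤ M k ω := fun k ω =>
    Finset.prod_nonneg fun i _ => (hGpos i ω).le
  have hMle : ∀ k ω, M k ω ≤ Real.exp |t| ^ k := by
    intro k ω
    calc M k ω ≤ ∏ _i ∈ Finset.range k, Real.exp |t| :=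
          Finset.prod_le_prod (fun i _ => (hGpos i ω).le) (fun i _ => hGle i ω)
      _ = Real.exp |t| ^ k := by rw [Finset.prod_const, Finset.card_range]
  have hMsm : ∀ k, StronglyMeasurable (M k) := fun k =>
    Finset.stronglyMeasurable_fun_prod (Finset.range k) fun i _ => hGsm i
  have hMint : ∀ k, Integrable (M k) P := by
    intro k
    refine Integrable.mono' (integrable_const (Real.exp |t| ^ k))
      (hMsm k).aestronglyMeasurable ?_
    exact Filter.Eventually.of_forall fun ω => by
      rw [Real.norm_eq_abs, abs_of_nonneg (hMnonneg k ω)]; exact hMle k ω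
  have hEM : ∀ k, ∫ ω, M k ω ∂P ≤ 1 := by
    intro k
    induction k with
    | zero => simp [hMdef]
    | succ k ih =>
      have hindepk : IndepFun (∏ i ∈ Finset.range k, G i) (G k) P :=
        hGindep.indepFun_prod_range_succ hGmeas k
      have hsplit : M (k + 1) = (∏ i ∈ Finset.range k, G i) * G k := by
        funext ω
        simp only [hMdef, Pi.mul_apply, Finset.prod_apply]
        rw [Finset.prod_range_succ]
      have hmul := hindepk.integral_mul_eq_mul_integral
        (by rw [← hMeqProd]; exact (hMint k).aestronglyMeasurable) (hGint k).aestronglyMeasurable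
      have h1 : ∫ ω, M (k + 1) ω ∂P =
          (∫ ω, M k ω ∂P) * ∫ ω, G k ω ∂P := by
        rw [hsplit]
        show integral P ((∏ i ∈ Finset.range k, G i) * G k) =
          integral P (M k) * integral P (G k)
        rw [hmul, hMeqProd k]
      rw [h1]
      have hEMnonneg : 0 ≤ ∫ ω, M k ω ∂P := integral_nonneg fun ω => hMnonneg k ω
      have hEGnonneg : 0 ≤ ∫ ω, G k ω ∂P := integral_nonneg fun ω => (hGpos k ω).le
      calc (∫ ω, M k ω ∂P) * ∫ ω, G k ω ∂P ≤ 1 * 1 :=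
            mul_le_mul ih (hEG k) hEGnonneg (by linarith)
        _ = 1 := by ring
  -- the filtration and supermartingale
  set ℱ : Filtration ℕ m0 := Filtration.natural G hGsm with hℱdef
  set f : ℕ → Ω → ℝ := fun k => M (k + 1) with hfdef
  have hadp : StronglyAdapted ℱ f := by
    intro k
    have h1 : ∀ i ∈ Finset.range (k + 1), StronglyMeasurable[ℱ k] (G i) := by
      intro i hi
      exact (Filtration.stronglyAdapted_natural hGsm i).mono
        (ℱ.mono (Nat.lt_succ_iff.mp (Finset.mem_range.mp hi)))
    exact Finset.stronglyMeasurable_fun_prod (Finset.range (k + 1)) h1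
  have hsuper : Supermartingale f ℱ P := by
    refine supermartingale_nat hadp (fun k => hMint (k + 1)) fun k => ?_
    have hmul : f (k + 1) = M (k + 1) * G (k + 1) := by
      funext ω
      simp only [hfdef, hMdef, Pi.mul_apply]
      rw [Finset.prod_range_succ]
    have step2 : P[f (k+1)|ℱ k] =ᵐ[P] M (k + 1) * P[G (k+1)|ℱ k] := by
      rw [hmul]
      exact condExp_mul_of_stronglyMeasurable_left (hadp k)
        (by rw [← hmul]; exact hMint (k + 2)) (hGint (k + 1))
    have step3 : P[G (k+1)|ℱ k] =ᵐ[P] fun _ => ∫ ω, G (k+1) ω ∂P :=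
      hGindep.condExp_natural_ae_eq_of_lt hGsm (Nat.lt_succ_self k)
    refine step2.le.trans ?_
    filter_upwards [step3] with ω hω
    simp only [Pi.mul_apply]
    rw [hω]
    exact mul_le_of_le_one_right (hMnonneg (k+1) ω) (hEG (k+1))
  -- apply Ville's inequality at time n-1
  have hville := ville_ineq hsuper (fun k ω => hMnonneg (k+1) ω) (n - 1) hε
  have hsub : {ω | ∃ k, n ≤ k ∧ ε ≤ ∏ i ∈ Finset.range k,
        Real.exp (t * ((if X i ω ≤ c then (1:ℝ) else 0) - p) - t ^ 2 / 8)} ⊆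
      {ω | ∃ j, n - 1 ≤ j ∧ ε ≤ f j ω} := by
    intro ω hω
    obtain ⟨k, hk, hεM⟩ := hω
    refine ⟨k - 1, by omega, ?_⟩
    have hk1 : k - 1 + 1 = k := by omega
    simp only [hfdef, hk1]
    exact hεM
  calc P {ω | ∃ k, n ≤ k ∧ ε ≤ ∏ i ∈ Finset.range k,
        Real.exp (t * ((if X i ω ≤ c then (1:ℝ) else 0) - p) - t ^ 2 / 8)}
      ≤ P {ω | ∃ j, n - 1 ≤ j ∧ ε ≤ f j ω} := measure_mono hsub
    _ ≤ ENNReal.ofReal ((∫ ω, f (n-1) ω ∂P) / ε) := hville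
    _ ≤ ENNReal.ofReal (1 / ε) := by
        apply ENNReal.ofReal_le_ofReal
        gcongr
        exact hEM (n - 1 + 1)

set_option maxHeartbeats 1000000 in
/-- Supremal inequality for empirical quantiles (improvement of Serfling's inequality):
if the `α`-quantile `q` is unique, then
`P(sup_{k ≥ n} |F_k⁻¹(α) - q| > x) ≤ 2 exp(-2 n d(x)²)` where
`d(x) = min{F(q+x) - α, α - F(q-x)}`. -/
theorem stmt_7 {Ω : Type*} [MeasurableSpace Ω] (P : Measure Ω) [IsProbabilityMeasure P]
    (X : ℕ → Ω → ℝ) (hmeas : ∀ i, Measurable (X i))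
    (hindep : iIndepFun X P)
    (hident : ∀ i, Measure.map (X i) P = Measure.map (X 0) P)
    (F : ℝ → ℝ) (hF : ∀ t, F t = (P {ω | X 0 ω ≤ t}).toReal)
    (α : ℝ) (hα : α ∈ Set.Ioo (0:ℝ) 1)
    (q : ℝ) (hq : q = sInf {t : ℝ | α ≤ F t})
    (huniq : ∀ ε : ℝ, 0 < ε → F (q - ε) < α ∧ α < F (q + ε))
    (empQuant : ℕ → Ω → ℝ)
    (hEQ : ∀ k ω, empQuant k ω =
      sInf {t : ℝ | α ≤ (1 / (k : ℝ)) *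
        ((Finset.range k).filter (fun i => X i ω ≤ t)).card})
    (n : ℕ) (hn : 1 ≤ n) (x : ℝ) (hx : 0 < x)
    (d : ℝ) (hd : d = min (F (q + x) - α) (α - F (q - x))) :
    (P {ω | ∃ k, n ≤ k ∧ x < |empQuant k ω - q|}).toReal ≤
      2 * Real.exp (-2 * (n : ℝ) * d ^ 2) := by
  classical
  obtain ⟨hα0, hα1⟩ := hα
  obtain ⟨hlow, hup⟩ := huniq x hx
  set δ₁ : ℝ := F (q + x) - α with hδ₁def
  set δ₂ : ℝ := α - F (q - x) with hδ₂def
  have hδ₁pos : 0 < δ₁ := sub_pos.2 hup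
  have hδ₂pos : 0 < δ₂ := sub_pos.2 hlow
  have hdpos : 0 < d := by rw [hd]; exact lt_min hδ₁pos hδ₂pos
  have hd₁ : d ≤ δ₁ := by rw [hd]; exact min_le_left _ _
  have hd₂ : d ≤ δ₂ := by rw [hd]; exact min_le_right _ _
  have hptoReal : ∀ (c : ℝ) (i : ℕ), (P {ω | X i ω ≤ c}).toReal = F c := by
    intro c i
    have h1 : {ω | X i ω ≤ c} = X i ⁻¹' (Set.Iic c) := rfl
    have h2 : {ω | X 0 ω ≤ c} = X 0 ⁻¹' (Set.Iic c) := rfl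
    rw [hF c, h1, h2, ← Measure.map_apply (hmeas i) measurableSet_Iic,
      ← Measure.map_apply (hmeas 0) measurableSet_Iic, hident i]
  have hFbd : ∀ c : ℝ, 0 ≤ F c ∧ F c ≤ 1 := by
    intro c
    rw [hF c]
    refine ⟨ENNReal.toReal_nonneg, ?_⟩
    calc (P {ω | X 0 ω ≤ c}).toReal ≤ (1 : ℝ≥0∞).toReal :=
          ENNReal.toReal_mono ENNReal.one_ne_top prob_le_one
      _ = 1 := ENNReal.toReal_one
  set t₁ : ℝ := -(4 * δ₁) with ht₁def
  set t₂ : ℝ := 4 * δ₂ with ht₂def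
  set ε₁ : ℝ := Real.exp (2 * δ₁ ^ 2 * n) with hε₁def
  set ε₂ : ℝ := Real.exp (2 * δ₂ ^ 2 * n) with hε₂def
  have hε₁pos : 0 < ε₁ := Real.exp_pos _
  have hε₂pos : 0 < ε₂ := Real.exp_pos _
  set Ev1 : Set Ω := {ω | ∃ k, n ≤ k ∧ ε₁ ≤ ∏ i ∈ Finset.range k,
      Real.exp (t₁ * ((if X i ω ≤ q + x then (1:ℝ) else 0) - F (q + x)) - t₁ ^ 2 / 8)}
    with hEv1def
  set Ev2 : Set Ω := {ω | ∃ k, n ≤ k ∧ ε₂ ≤ ∏ i ∈ Finset.range k,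
      Real.exp (t₂ * ((if X i ω ≤ q - x then (1:ℝ) else 0) - F (q - x)) - t₂ ^ 2 / 8)}
    with hEv2def
  have hside1 : P Ev1 ≤ ENNReal.ofReal (1 / ε₁) :=
    one_sided_s7 P X hmeas hindep (q + x) (F (q + x)) t₁ (fun i => hptoReal _ i)
      (hFbd _).1 (hFbd _).2 n hn hε₁pos
  have hside2 : P Ev2 ≤ ENNReal.ofReal (1 / ε₂) :=
    one_sided_s7 P X hmeas hindep (q - x) (F (q - x)) t₂ (fun i => hptoReal _ i)
      (hFbd _).1 (hFbd _).2 n hn hε₂pos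
  -- the inclusion
  have hsub : {ω | ∃ k, n ≤ k ∧ x < |empQuant k ω - q|} ⊆ Ev1 ∪ Ev2 := by
    intro ω hω
    obtain ⟨k, hk, habs⟩ := hω
    have hk1 : 1 ≤ k := hn.trans hk
    have hk0 : (0:ℝ) < (k:ℝ) := by exact_mod_cast hk1
    have hkn : (n:ℝ) ≤ (k:ℝ) := by exact_mod_cast hk
    set S : Set ℝ := {s : ℝ | α ≤ (1 / (k : ℝ)) *
        ((Finset.range k).filter (fun i => X i ω ≤ s)).card} with hSdef
    have hEQk : empQuant k ω = sInf S := hEQ k ω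
    have hRne : (Finset.range k).Nonempty := Finset.nonempty_range_iff.2 (by omega)
    have himg : ((Finset.range k).image (fun i => X i ω)).Nonempty := hRne.image _
    have hSne : S.Nonempty := by
      refine ⟨((Finset.range k).image (fun i => X i ω)).max' himg, ?_⟩
      have hfilter : (Finset.range k).filter
          (fun i => X i ω ≤ ((Finset.range k).image (fun i => X i ω)).max' himg) =
          Finset.range k := by
        refine Finset.filter_true_of_mem fun i hi => ?_
        exact Finset.le_max' ((Finset.range k).image (fun i => X i ω)) (X i ω)
          (Finset.mem_image_of_mem _ hi)
      simp only [hSdef, Set.mem_setOf_eq, hfilter, Finset.card_range]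
      rw [one_div, inv_mul_cancel₀ hk0.ne']
      exact hα1.le
    have hSbdd : BddBelow S := by
      refine ⟨((Finset.range k).image (fun i => X i ω)).min' himg, fun s hs => ?_⟩
      simp only [hSdef, Set.mem_setOf_eq] at hs
      have hcardpos : 0 < ((Finset.range k).filter (fun i => X i ω ≤ s)).card := by
        by_contra hc
        push_neg at hc
        interval_cases h : ((Finset.range k).filter (fun i => X i ω ≤ s)).card
        · simp [h] at hs; linarith
      obtain ⟨i, hi⟩ := Finset.card_pos.mp hcardpos
      rw [Finset.mem_filter] at hi
      calc ((Finset.range k).image (fun i => X i ω)).min' himg ≤ X i ω :=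
            Finset.min'_le _ _ (Finset.mem_image_of_mem _ hi.1)
        _ ≤ s := hi.2
    -- sum = card
    have hcard : ∀ c : ℝ, (∑ i ∈ Finset.range k, if X i ω ≤ c then (1:ℝ) else 0) =
        ((Finset.range k).filter (fun i => X i ω ≤ c)).card := by
      intro c
      rw [Finset.sum_boole]
    have hsum : ∀ (t c pc : ℝ),
        ∑ i ∈ Finset.range k, (t * ((if X i ω ≤ c then (1:ℝ) else 0) - pc) - t ^ 2 / 8) =
          t * ((((Finset.range k).filter (fun i => X i ω ≤ c)).card : ℝ) - pc * k) -
            k * (t ^ 2 / 8) := by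
      intro t c pc
      rw [Finset.sum_sub_distrib, Finset.sum_const, Finset.card_range, ← Finset.mul_sum,
        Finset.sum_sub_distrib, Finset.sum_const, Finset.card_range, hcard c]
      push_cast
      ring
    rcases lt_abs.1 habs with h1 | h1
    · -- empQuant k ω > q + x : upper side
      left
      have hnotmem : (q + x) ∉ S := by
        intro hmem
        have := csInf_le hSbdd hmem
        rw [← hEQk] at this
        linarith
      simp only [hSdef, Set.mem_setOf_eq, not_le] at hnotmem
      have hcardlt : ((((Finset.range k).filter (fun i => X i ω ≤ q + x)).card : ℝ)) <
          α * k := by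
        have h3 : (1 / (k:ℝ)) * ((((Finset.range k).filter
            (fun i => X i ω ≤ q + x)).card : ℝ)) < α := hnotmem
        calc ((((Finset.range k).filter (fun i => X i ω ≤ q + x)).card : ℝ))
            = (k:ℝ) * ((1 / (k:ℝ)) * ((((Finset.range k).filter
                (fun i => X i ω ≤ q + x)).card : ℝ))) := by field_simp
          _ < (k:ℝ) * α := by exact mul_lt_mul_of_pos_left h3 hk0
          _ = α * k := mul_comm _ _
      refine ⟨k, hk, ?_⟩
      rw [← Real.exp_sum, hsum t₁ (q + x) (F (q + x))]
      apply Real.exp_le_exp.2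
      have hδ₁eq : F (q + x) = α + δ₁ := by rw [hδ₁def]; ring
      have e1 : t₁ * (((((Finset.range k).filter (fun i => X i ω ≤ q + x)).card : ℝ)) -
            F (q + x) * k) - k * (t₁ ^ 2 / 8) =
          4 * δ₁ * (α * k - ((((Finset.range k).filter
            (fun i => X i ω ≤ q + x)).card : ℝ))) + 2 * δ₁ ^ 2 * k := by
        rw [ht₁def, hδ₁eq]; ring
      rw [e1]
      have f1 : 2 * δ₁ ^ 2 * (n:ℝ) ≤ 2 * δ₁ ^ 2 * (k:ℝ) :=
        mul_le_mul_of_nonneg_left hkn (by positivity)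
      have f2 : 0 ≤ 4 * δ₁ * (α * k - ((((Finset.range k).filter
          (fun i => X i ω ≤ q + x)).card : ℝ))) :=
        mul_nonneg (by linarith) (by linarith)
      linarith
    · -- empQuant k ω < q - x : lower side
      right
      have hinf_lt : sInf S < q - x := by rw [← hEQk]; linarith
      obtain ⟨s₀, hs₀S, hs₀lt⟩ := (csInf_lt_iff hSbdd hSne).1 hinf_lt
      simp only [hSdef, Set.mem_setOf_eq] at hs₀S
      have hsubset : (Finset.range k).filter (fun i => X i ω ≤ s₀) ⊆
          (Finset.range k).filter (fun i => X i ω ≤ q - x) := by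
        apply Finset.monotone_filter_right
        intro i _ hi
        exact le_trans hi hs₀lt.le
      have hcardle : (((Finset.range k).filter (fun i => X i ω ≤ s₀)).card : ℝ) ≤
          (((Finset.range k).filter (fun i => X i ω ≤ q - x)).card : ℝ) := by
        exact_mod_cast Finset.card_le_card hsubset
      have hcardge : α * k ≤
          (((Finset.range k).filter (fun i => X i ω ≤ q - x)).card : ℝ) := by
        have h3 : α ≤ (1 / (k:ℝ)) *
            (((Finset.range k).filter (fun i => X i ω ≤ s₀)).card : ℝ) := hs₀S
        have h4 : α * k ≤ (((Finset.range k).filter (fun i => X i ω ≤ s₀)).card : ℝ) := by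
          have := mul_le_mul_of_nonneg_left h3 hk0.le
          calc α * k = (k:ℝ) * α := mul_comm _ _
            _ ≤ (k:ℝ) * ((1 / (k:ℝ)) *
                (((Finset.range k).filter (fun i => X i ω ≤ s₀)).card : ℝ)) := this
            _ = (((Finset.range k).filter (fun i => X i ω ≤ s₀)).card : ℝ) := by
                field_simp
        linarith
      refine ⟨k, hk, ?_⟩
      rw [← Real.exp_sum, hsum t₂ (q - x) (F (q - x))]
      apply Real.exp_le_exp.2
      have hδ₂eq : F (q - x) = α - δ₂ := by rw [hδ₂def]; ring
      have e2 : t₂ * (((((Finset.range k).filter (fun i => X i ω ≤ q - x)).card : ℝ)) -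
            F (q - x) * k) - k * (t₂ ^ 2 / 8) =
          4 * δ₂ * (((((Finset.range k).filter
            (fun i => X i ω ≤ q - x)).card : ℝ)) - α * k) + 2 * δ₂ ^ 2 * k := by
        rw [ht₂def, hδ₂eq]; ring
      rw [e2]
      have f1 : 2 * δ₂ ^ 2 * (n:ℝ) ≤ 2 * δ₂ ^ 2 * (k:ℝ) :=
        mul_le_mul_of_nonneg_left hkn (by positivity)
      have f2 : 0 ≤ 4 * δ₂ * (((((Finset.range k).filter
          (fun i => X i ω ≤ q - x)).card : ℝ)) - α * k) :=
        mul_nonneg (by linarith) (by linarith)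
      linarith
  -- final arithmetic
  have hr₁ : (1 / ε₁ : ℝ) = Real.exp (-(2 * δ₁ ^ 2 * n)) := by
    rw [hε₁def, Real.exp_neg, one_div]
  have hr₂ : (1 / ε₂ : ℝ) = Real.exp (-(2 * δ₂ ^ 2 * n)) := by
    rw [hε₂def, Real.exp_neg, one_div]
  have hbound : ∀ δ : ℝ, 0 < δ → d ≤ δ →
      Real.exp (-(2 * δ ^ 2 * n)) ≤ Real.exp (-2 * (n:ℝ) * d ^ 2) := by
    intro δ hδ hdδ
    apply Real.exp_le_exp.2
    have hsq : d ^ 2 ≤ δ ^ 2 := pow_le_pow_left₀ hdpos.le hdδ 2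
    have hn0 : (0:ℝ) ≤ (n:ℝ) := Nat.cast_nonneg n
    nlinarith
  have hmeasure : P {ω | ∃ k, n ≤ k ∧ x < |empQuant k ω - q|} ≤
      ENNReal.ofReal (1 / ε₁ + 1 / ε₂) := by
    calc P {ω | ∃ k, n ≤ k ∧ x < |empQuant k ω - q|} ≤ P (Ev1 ∪ Ev2) := measure_mono hsub
      _ ≤ P Ev1 + P Ev2 := measure_union_le _ _
      _ ≤ ENNReal.ofReal (1 / ε₁) + ENNReal.ofReal (1 / ε₂) := add_le_add hside1 hside2
      _ = ENNReal.ofReal (1 / ε₁ + 1 / ε₂) :=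
          (ENNReal.ofReal_add (by positivity) (by positivity)).symm
  have htoReal : (P {ω | ∃ k, n ≤ k ∧ x < |empQuant k ω - q|}).toReal ≤ 1 / ε₁ + 1 / ε₂ :=
    ENNReal.toReal_le_of_le_ofReal (by positivity) hmeasure
  calc (P {ω | ∃ k, n ≤ k ∧ x < |empQuant k ω - q|}).toReal ≤ 1 / ε₁ + 1 / ε₂ := htoReal
    _ ≤ Real.exp (-2 * (n:ℝ) * d ^ 2) + Real.exp (-2 * (n:ℝ) * d ^ 2) := by
        rw [hr₁, hr₂]
        exact add_le_add (hbound δ₁ hδ₁pos hd₁) (hbound δ₂ hδ₂pos hd₂)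
    _ = 2 * Real.exp (-2 * (n:ℝ) * d ^ 2) := by ring
end

section
/- Let X₁, X₂, … be i.i.d. with distribution function F, α ∈ (0,1), and let d(x) = min{F(q_α + x) - α, α - F(q_α - x)} where q_α = F⁻¹(α). Then for all x > 0 with d(x) > 0 and all n ∈ ℕ, P(sup_{k ≥ n}(Fₖ⁻¹(α) - q_α) > x) ≤ exp(-2 n (F(q_α + x) - α)²). -/
open MeasureTheory ProbabilityTheory

section Aux

/-- Hoeffding's lemma for a Bernoulli(p) variable. -/
lemma hoeff_bern {p : ℝ} (hp0 : 0 ≤ p) (hp1 : p ≤ 1) {h : ℝ} (hh : 0 ≤ h) :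
    p * Real.exp (h * (p - 1)) + (1 - p) * Real.exp (h * p) ≤ Real.exp (h ^ 2 / 8) := by
  set D : ℝ → ℝ := fun y => 1 - p + p * Real.exp (-y) with hDdef
  have hD : ∀ y, 0 < D y := by
    intro y
    have hE := Real.exp_pos (-y)
    show (0:ℝ) < 1 - p + p * Real.exp (-y)
    rcases le_or_gt (Real.exp (-y)) 1 with hE1 | hE1
    · nlinarith [mul_nonneg (sub_nonneg.2 hp1) (sub_nonneg.2 hE1)]
    · nlinarith [mul_nonneg hp0 (sub_nonneg.2 hE1.le)]
  set g : ℝ → ℝ := fun y => Real.log (D y) + y * p - y ^ 2 / 8 with hgdef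
  set g' : ℝ → ℝ := fun y => p - y / 4 - p * Real.exp (-y) / D y with hg'def
  have hDder : ∀ y, HasDerivAt D (-(p * Real.exp (-y))) y := by
    intro y
    have h1 : HasDerivAt (fun y : ℝ => -y) (-1) y := (hasDerivAt_id y).neg
    have h2 : HasDerivAt (fun y : ℝ => Real.exp (-y)) (Real.exp (-y) * (-1)) y :=
      (Real.hasDerivAt_exp (-y)).comp y h1
    have h3 := (h2.const_mul p).const_add (1 - p)
    exact h3.congr_deriv (by ring)
  have hgder : ∀ y, HasDerivAt g (g' y) y := by
    intro y
    have hlog := (hDder y).log (hD y).ne'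
    have hyp : HasDerivAt (fun y : ℝ => y * p) p y := by
      simpa using (hasDerivAt_id y).mul_const p
    have hsq : HasDerivAt (fun y : ℝ => y ^ 2 / 8) (y / 4) y := by
      have := (hasDerivAt_pow 2 y).div_const 8
      exact this.congr_deriv (by ring)
    have := (hlog.add hyp).sub hsq
    refine this.congr_deriv ?_
    simp only [hg'def]
    field_simp
    ring
  have hg'der : ∀ y, HasDerivAt g'
      (-(p * Real.exp (-y) / D y - 1 / 2) ^ 2) y := by
    intro y
    have h1 : HasDerivAt (fun y : ℝ => -y) (-1) y := (hasDerivAt_id y).neg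
    have h2 : HasDerivAt (fun y : ℝ => Real.exp (-y)) (Real.exp (-y) * (-1)) y :=
      (Real.hasDerivAt_exp (-y)).comp y h1
    have hf : HasDerivAt (fun y : ℝ => p * Real.exp (-y)) (-(p * Real.exp (-y))) y := by
      exact (h2.const_mul p).congr_deriv (by ring)
    have hquot := hf.div (hDder y) (hD y).ne'
    have hlin : HasDerivAt (fun y : ℝ => p - y / 4) (-(1/4)) y := by
      have := ((hasDerivAt_id y).div_const 4).const_sub p
      exact this
    have := hlin.sub hquot
    refine this.congr_deriv ?_
    have hDy := (hD y).ne'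
    field_simp
    ring
  have hg'anti : Antitone g' := by
    have hdiff : Differentiable ℝ g' := fun y => (hg'der y).differentiableAt
    refine antitone_of_deriv_nonpos hdiff ?_
    intro y
    rw [(hg'der y).deriv]
    exact neg_nonpos.2 (sq_nonneg _)
  have hg'0 : g' 0 = 0 := by
    simp only [hg'def, hDdef]
    norm_num
  have hganti : AntitoneOn g (Set.Ici 0) := by
    refine antitoneOn_of_deriv_nonpos (convex_Ici 0) ?_ ?_ ?_
    · exact fun y _ => ((hgder y).differentiableAt.continuousAt).continuousWithinAt
    · exact fun y _ => (hgder y).differentiableAt.differentiableWithinAt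
    · intro y hy
      rw [(hgder y).deriv]
      rw [interior_Ici] at hy
      calc g' y ≤ g' 0 := hg'anti hy.le
        _ = 0 := hg'0
  have hg0 : g 0 = 0 := by
    simp only [hgdef, hDdef]
    norm_num
  have hgh : g h ≤ 0 := by
    have := hganti (Set.self_mem_Ici) (Set.mem_Ici.2 hh) hh
    simpa [hg0] using this
  have hlog : Real.log (D h) + h * p ≤ h ^ 2 / 8 := by
    have : Real.log (D h) + h * p - h ^ 2 / 8 ≤ 0 := by
      have := hgh; simp only [hgdef] at this; linarith
    linarith
  have key : D h * Real.exp (h * p) ≤ Real.exp (h ^ 2 / 8) := by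
    have h1 : D h * Real.exp (h * p) = Real.exp (Real.log (D h) + h * p) := by
      rw [Real.exp_add, Real.exp_log (hD h)]
    rw [h1]
    exact Real.exp_le_exp.2 hlog
  have heq : p * Real.exp (h * (p - 1)) + (1 - p) * Real.exp (h * p) =
      D h * Real.exp (h * p) := by
    simp only [hDdef]
    have : Real.exp (h * (p - 1)) = Real.exp (-h) * Real.exp (h * p) := by
      rw [← Real.exp_add]; ring_nf
    rw [this]; ring
  rw [heq]; exact key

/-- Empirical quantile exceeds `r` iff fewer than `α k` of the first `k` values are `≤ r`. -/
lemma quant_iff {α r : ℝ} (hα0 : 0 < α) (hα1 : α < 1) {k : ℕ} (hk : 1 ≤ k) (v : ℕ → ℝ) :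
    r < sInf {t : ℝ | α ≤ (1 / (k : ℝ)) * ((Finset.range k).filter (fun i => v i ≤ t)).card} ↔
    (((Finset.range k).filter (fun i => v i ≤ r)).card : ℝ) < α * k := by
  classical
  have kpos : (0 : ℝ) < k := by exact_mod_cast Nat.pos_of_ne_zero (by omega)
  set S : Set ℝ :=
    {t : ℝ | α ≤ (1 / (k : ℝ)) * ((Finset.range k).filter (fun i => v i ≤ t)).card} with hSdef
  have hmem : ∀ t : ℝ, t ∈ S ↔
      α * k ≤ (((Finset.range k).filter (fun i => v i ≤ t)).card : ℝ) := by
    intro t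
    simp only [hSdef, Set.mem_setOf_eq, one_div]
    rw [inv_mul_eq_div, le_div_iff₀ kpos]
  have hmono : ∀ {t₁ t₂ : ℝ}, t₁ ≤ t₂ →
      ((Finset.range k).filter (fun i => v i ≤ t₁)).card ≤
      ((Finset.range k).filter (fun i => v i ≤ t₂)).card := by
    intro t₁ t₂ h
    refine Finset.card_le_card (Finset.monotone_filter_right _ ?_)
    intro i _ hi
    exact le_trans hi h
  have hrange : (Finset.range k).Nonempty := Finset.nonempty_range_iff.2 (by omega)
  have hne : S.Nonempty := by
    refine ⟨((Finset.range k).image v).max' (hrange.image v), ?_⟩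
    rw [hmem]
    have : (Finset.range k).filter
        (fun i => v i ≤ ((Finset.range k).image v).max' (hrange.image v)) =
        Finset.range k := by
      refine Finset.filter_true_of_mem (fun i hi => ?_)
      exact Finset.le_max' _ _ (Finset.mem_image_of_mem v hi)
    rw [this, Finset.card_range]
    nlinarith
  have hbdd : BddBelow S := by
    refine ⟨((Finset.range k).image v).min' (hrange.image v), fun t ht => ?_⟩
    by_contra hlt
    push_neg at hlt
    rw [hmem] at ht
    have hempty : (Finset.range k).filter (fun i => v i ≤ t) = ∅ := by
      refine Finset.filter_false_of_mem (fun i hi => ?_)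
      push_neg
      exact lt_of_lt_of_le hlt (Finset.min'_le _ _ (Finset.mem_image_of_mem v hi))
    rw [hempty] at ht
    simp at ht
    nlinarith
  have hsInfmem : sInf S ∈ S := by
    set m := sInf S with hmdef
    set G := (Finset.range k).filter (fun i => m < v i) with hGdef
    by_cases hG : G.Nonempty
    · set w := (G.image v).min' (hG.image v) with hwdef
      have hw : m < w := by
        obtain ⟨i, hiG, hiw⟩ := Finset.mem_image.1 (Finset.min'_mem (G.image v) (hG.image v))
        have : m < v i := (Finset.mem_filter.1 hiG).2
        rw [hiw] at this
        exact this
      obtain ⟨t, htS, htw⟩ := exists_lt_of_csInf_lt hne hw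
      have hsub : (Finset.range k).filter (fun i => v i ≤ t) ⊆
          (Finset.range k).filter (fun i => v i ≤ m) := by
        intro i hi
        obtain ⟨hik, hit⟩ := Finset.mem_filter.1 hi
        refine Finset.mem_filter.2 ⟨hik, ?_⟩
        by_contra hmi
        push_neg at hmi
        have hiG : i ∈ G := Finset.mem_filter.2 ⟨hik, hmi⟩
        have : w ≤ v i := Finset.min'_le _ _ (Finset.mem_image_of_mem v hiG)
        linarith
      rw [hmem] at htS ⊢
      calc α * k ≤ (((Finset.range k).filter (fun i => v i ≤ t)).card : ℝ) := htS
        _ ≤ _ := by exact_mod_cast Finset.card_le_card hsub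
    · rw [hmem]
      have : (Finset.range k).filter (fun i => v i ≤ m) = Finset.range k := by
        refine Finset.filter_true_of_mem (fun i hi => ?_)
        by_contra hmi
        push_neg at hmi
        exact hG ⟨i, Finset.mem_filter.2 ⟨hi, hmi⟩⟩
      rw [this]
      simp only [Finset.card_range]
      nlinarith
  constructor
  · intro hr
    by_contra hc
    push_neg at hc
    have : r ∈ S := (hmem r).2 hc
    exact absurd (csInf_le hbdd this) (by linarith)
  · intro hcard
    have : ∀ t ∈ S, r < t := by
      intro t htS
      by_contra hrt
      push_neg at hrt
      rw [hmem] at htS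
      have := hmono hrt
      have : α * k ≤ (((Finset.range k).filter (fun i => v i ≤ r)).card : ℝ) := by
        calc α * k ≤ (((Finset.range k).filter (fun i => v i ≤ t)).card : ℝ) := htS
          _ ≤ _ := by exact_mod_cast this
      linarith
    exact this _ hsInfmem

lemma integrable_of_bdd {Ω : Type*} [MeasurableSpace Ω] (P : Measure Ω)
    [IsProbabilityMeasure P] {f : Ω → ℝ} {C : ℝ} (hf : Measurable f) (h : ∀ ω, |f ω| ≤ C) :
    Integrable f P :=
  Integrable.mono' (integrable_const C) hf.aestronglyMeasurable (Filter.Eventually.of_forall h)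

lemma integrable_prod_bdd {Ω : Type*} [MeasurableSpace Ω] (P : Measure Ω)
    [IsProbabilityMeasure P] (W : ℕ → Ω → ℝ) (hmeas : ∀ i, Measurable (W i)) (B : ℝ)
    (hpos : ∀ i ω, 0 ≤ W i ω) (hbd : ∀ i ω, W i ω ≤ B) (t : Finset ℕ) :
    Integrable (fun ω => ∏ i ∈ t, W i ω) P := by
  refine Integrable.mono' (integrable_const ((max B 0) ^ t.card)) ?_ ?_
  · exact (Finset.measurable_prod t (fun i _ => hmeas i)).aestronglyMeasurable
  · refine Filter.Eventually.of_forall (fun ω => ?_)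
    rw [Real.norm_eq_abs, abs_of_nonneg (Finset.prod_nonneg (fun i _ => hpos i ω))]
    calc ∏ i ∈ t, W i ω ≤ ∏ i ∈ t, max B 0 :=
          Finset.prod_le_prod (fun i _ => hpos i ω)
            (fun i _ => le_trans (hbd i ω) (le_max_left B 0))
      _ = (max B 0) ^ t.card := Finset.prod_const _

lemma integral_prod_indep {Ω : Type*} [MeasurableSpace Ω] (P : Measure Ω)
    [IsProbabilityMeasure P] (W : ℕ → Ω → ℝ)
    (hind : iIndepFun W P)
    (hmeas : ∀ i, Measurable (W i)) (t : Finset ℕ) :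
    ∫ ω, ∏ i ∈ t, W i ω ∂P = ∏ i ∈ t, ∫ ω, W i ω ∂P := by
  classical
  induction t using Finset.induction_on with
  | empty => simp
  | insert i t hi ih =>
    have hIndep : IndepFun (W i) (∏ j ∈ t, W j) P :=
      (hind.indepFun_finset_prod_of_notMem hmeas hi).symm
    have hpm : Measurable (∏ j ∈ t, W j) := by
      have := Finset.measurable_prod t (fun j _ => hmeas j)
      simpa [Finset.prod_fn] using this
    have h1 := hIndep.integral_mul_eq_mul_integral (hmeas i).aestronglyMeasurable hpm.aestronglyMeasurable
    have e1 : (fun ω => W i ω * ∏ j ∈ t, W j ω) = W i * ∏ j ∈ t, W j := by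
      funext ω; simp [Finset.prod_apply]
    have e2 : (fun ω => ∏ j ∈ t, W j ω) = ∏ j ∈ t, W j := by
      funext ω; simp [Finset.prod_apply]
    simp only [Finset.prod_insert hi, ← ih, e1, e2]
    exact h1

end Aux

set_option maxHeartbeats 1000000 in
/-- One-sided supremal quantile inequality:
`P(sup_{k ≥ n}(F_k⁻¹(α) - q_α) > x) ≤ exp(-2 n (F(q_α + x) - α)²)` for `x > 0` with
`d(x) = min{F(q_α+x) - α, α - F(q_α-x)} > 0`. -/
theorem stmt_8 {Ω : Type*} [MeasurableSpace Ω] (P : Measure Ω) [IsProbabilityMeasure P]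
    (X : ℕ → Ω → ℝ) (hmeas : ∀ i, Measurable (X i))
    (hindep : iIndepFun X P)
    (hident : ∀ i, Measure.map (X i) P = Measure.map (X 0) P)
    (F : ℝ → ℝ) (hF : ∀ t, F t = (P {ω | X 0 ω ≤ t}).toReal)
    (α : ℝ) (hα : α ∈ Set.Ioo (0:ℝ) 1)
    (q : ℝ) (hq : q = sInf {t : ℝ | α ≤ F t})
    (empQuant : ℕ → Ω → ℝ)
    (hEQ : ∀ k ω, empQuant k ω =
      sInf {t : ℝ | α ≤ (1 / (k : ℝ)) *
        ((Finset.range k).filter (fun i => X i ω ≤ t)).card})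
    (x : ℝ) (hx : 0 < x)
    (hdpos : 0 < min (F (q + x) - α) (α - F (q - x)))
    (n : ℕ) (hn : 1 ≤ n) :
    (P {ω | ∃ k, n ≤ k ∧ x < empQuant k ω - q}).toReal ≤
      Real.exp (-2 * (n : ℝ) * (F (q + x) - α) ^ 2) := by
  classical
  obtain ⟨hα0, hα1⟩ := hα
  set p : ℝ := F (q + x) with hpdef
  set δ : ℝ := p - α with hδdef
  have hδpos : 0 < δ := (lt_min_iff.1 hdpos).1
  have hp_eq : p = (P {ω | X 0 ω ≤ q + x}).toReal := hF (q + x)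
  have hp1 : p ≤ 1 := by
    rw [hp_eq]
    simpa using ENNReal.toReal_mono ENNReal.one_ne_top prob_le_one
  have hp0 : 0 < p := lt_trans hα0 (by linarith)
  set h : ℝ := 4 * δ with hhdef
  have hh : 0 < h := by positivity
  set c : ℝ := p * Real.exp (h * (p - 1)) + (1 - p) * Real.exp (h * p) with hcdef
  have hc_le : c ≤ Real.exp (h ^ 2 / 8) := hoeff_bern hp0.le hp1 hh.le
  have hc_pos : 0 < c := by
    have h1 := Real.exp_pos (h * (p - 1))
    have h2 := Real.exp_pos (h * p)
    nlinarith [mul_pos hp0 h1, mul_nonneg (sub_nonneg.2 hp1) h2.le]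
  -- the single-variable weight function
  set w : ℝ → ℝ :=
    fun t => Real.exp (h * (p - if t ≤ q + x then (1:ℝ) else 0)) / c with hwdef
  have hwmeas : Measurable w := by
    have hite : Measurable (fun t : ℝ => if t ≤ q + x then (1:ℝ) else 0) :=
      Measurable.ite measurableSet_Iic measurable_const measurable_const
    exact (Real.measurable_exp.comp ((measurable_const.sub hite).const_mul h)).div_const c
  set W : ℕ → Ω → ℝ := fun i ω => w (X i ω) with hWdef
  have hWmeas : ∀ i, Measurable (W i) := fun i => hwmeas.comp (hmeas i)
  have hWind : iIndepFun W P :=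
    hindep.comp (fun _ => w) (fun _ => hwmeas)
  have hWpos : ∀ i ω, 0 ≤ W i ω := fun i ω =>
    div_nonneg (Real.exp_pos _).le hc_pos.le
  set Bw : ℝ := Real.exp (h * p) / c with hBwdef
  have hBwpos : 0 < Bw := div_pos (Real.exp_pos _) hc_pos
  have hWbd : ∀ i ω, W i ω ≤ Bw := by
    intro i ω
    have hy : (0:ℝ) ≤ if X i ω ≤ q + x then (1:ℝ) else 0 := by
      split <;> norm_num
    have harg : h * (p - if X i ω ≤ q + x then (1:ℝ) else 0) ≤ h * p :=
      mul_le_mul_of_nonneg_left (by linarith) hh.le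
    exact div_le_div_of_nonneg_right (Real.exp_le_exp.2 harg) hc_pos.le
  have hWint1 : ∀ i, ∫ ω, W i ω ∂P = 1 := by
    intro i
    have hmap : ∫ ω, w (X i ω) ∂P = ∫ ω, w (X 0 ω) ∂P := by
      rw [← integral_map (hmeas i).aemeasurable hwmeas.aestronglyMeasurable,
        ← integral_map (hmeas 0).aemeasurable hwmeas.aestronglyMeasurable, hident i]
    have hWi : ∀ ω, W i ω = w (X i ω) := fun ω => rfl
    rw [show (fun ω => W i ω) = (fun ω => w (X i ω)) from rfl, hmap]
    set a : ℝ := Real.exp (h * (p - 1)) / c with hadef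
    set b : ℝ := Real.exp (h * p) / c with hbdef
    set E : Set Ω := {ω | X 0 ω ≤ q + x} with hEdef
    have hEmeas : MeasurableSet E := measurableSet_le (hmeas 0) measurable_const
    have hpt : ∀ ω, w (X 0 ω) = E.indicator (fun _ => a - b) ω + b := by
      intro ω
      by_cases hω : X 0 ω ≤ q + x
      · have hmem : ω ∈ E := hω
        rw [Set.indicator_of_mem hmem]
        simp only [hwdef, if_pos hω, hadef, hbdef]
        ring
      · have hmem : ω ∉ E := hω
        rw [Set.indicator_of_notMem hmem]
        simp only [hwdef, if_neg hω, hadef, hbdef]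
        rw [sub_zero, zero_add]
    rw [integral_congr_ae (Filter.Eventually.of_forall hpt)]
    rw [integral_add ((integrable_const (a - b)).indicator hEmeas) (integrable_const b)]
    rw [integral_indicator_const (a - b) hEmeas, integral_const]
    have hPE : P.real E = p := hp_eq.symm
    rw [hPE]
    simp only [probReal_univ, measure_univ, ENNReal.toReal_one, smul_eq_mul, one_smul, one_mul]
    rw [hadef, hbdef]
    field_simp
    rw [hcdef]
    ring_nf
  -- counting function
  set Nr : ℕ → Ω → ℝ :=
    fun k ω => (((Finset.range k).filter (fun i => X i ω ≤ q + x)).card : ℝ) with hNrdef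
  have hNr_sum : ∀ k ω, Nr k ω = ∑ i ∈ Finset.range k,
      (if X i ω ≤ q + x then (1:ℝ) else 0) := by
    intro k ω
    simp [hNrdef, Finset.sum_boole]
  have hNrmeas : ∀ k, Measurable (Nr k) := by
    intro k
    have hm : Measurable (fun ω => ∑ i ∈ Finset.range k,
        (if X i ω ≤ q + x then (1:ℝ) else 0)) := by
      refine Finset.measurable_sum _ (fun i _ => ?_)
      exact Measurable.ite (measurableSet_le (hmeas i) measurable_const)
        measurable_const measurable_const
    convert hm using 1
    funext ω
    exact hNr_sum k ω
  -- events
  set A : ℕ → Set Ω := fun k => {ω | Nr k ω < α * k} with hAdef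
  have hAmeas : ∀ k, MeasurableSet (A k) :=
    fun k => measurableSet_lt (hNrmeas k) measurable_const
  -- main set identification
  have hset : {ω | ∃ k, n ≤ k ∧ x < empQuant k ω - q} = ⋃ k, ⋃ (_ : n ≤ k), A k := by
    ext ω
    simp only [Set.mem_setOf_eq, Set.mem_iUnion]
    constructor
    · rintro ⟨k, hk, hlt⟩
      refine ⟨k, hk, ?_⟩
      have hk1 : 1 ≤ k := le_trans hn hk
      have hq : q + x < empQuant k ω := by linarith
      rw [hEQ k ω] at hq
      exact (quant_iff hα0 hα1 hk1 (fun i => X i ω)).1 hq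
    · rintro ⟨k, hk, hA⟩
      refine ⟨k, hk, ?_⟩
      have hk1 : 1 ≤ k := le_trans hn hk
      have := (quant_iff hα0 hα1 hk1 (fun i => X i ω)).2 hA
      rw [← hEQ k ω] at this
      linarith
  -- product formula
  have hprod : ∀ (k : ℕ) (ω : Ω), ∏ i ∈ Finset.range k, W i ω =
      Real.exp (h * (p * k - Nr k ω)) / c ^ k := by
    intro k ω
    have e1 : ∀ i, W i ω =
        Real.exp (h * (p - if X i ω ≤ q + x then (1:ℝ) else 0)) / c := fun i => rfl
    have estep : (∏ i ∈ Finset.range k, W i ω) =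
        (∏ i ∈ Finset.range k,
          Real.exp (h * (p - if X i ω ≤ q + x then (1:ℝ) else 0))) / c ^ k := by
      rw [show c ^ k = ∏ _i ∈ Finset.range k, c by
        rw [Finset.prod_const, Finset.card_range]]
      rw [← Finset.prod_div_distrib]
    rw [estep, ← Real.exp_sum]
    congr 2
    rw [← Finset.mul_sum]
    congr 1
    rw [Finset.sum_sub_distrib, Finset.sum_const, Finset.card_range,
      nsmul_eq_mul, ← hNr_sum k ω]
    ring
  -- lower bound for the partial product on the event A k
  have hprod_lb : ∀ k, n ≤ k → ∀ ω ∈ A k,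
      Real.exp (2 * δ ^ 2 * n) ≤ ∏ i ∈ Finset.range k, W i ω := by
    intro k hk ω hA
    rw [hprod k ω]
    have hAω : Nr k ω < α * k := hA
    have hkn : (n : ℝ) ≤ (k : ℝ) := Nat.cast_le.2 hk
    have hkpos : (0:ℝ) < k := lt_of_lt_of_le (by exact_mod_cast hn) hkn
    have e1 : Real.exp (h * δ * k) ≤ Real.exp (h * (p * k - Nr k ω)) := by
      apply Real.exp_le_exp.2
      have : δ * k ≤ p * k - Nr k ω := by nlinarith
      nlinarith [hh.le]
    have e2 : c ^ k ≤ Real.exp (h ^ 2 / 8) ^ k := pow_le_pow_left₀ hc_pos.le hc_le k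
    have hcpow : (0:ℝ) < c ^ k := pow_pos hc_pos k
    have hepow : (0:ℝ) < Real.exp (h ^ 2 / 8) ^ k := pow_pos (Real.exp_pos _) k
    calc Real.exp (2 * δ ^ 2 * n)
        ≤ Real.exp (2 * δ ^ 2 * k) := by
          apply Real.exp_le_exp.2
          nlinarith [sq_nonneg δ]
      _ = Real.exp (h * δ * k) / Real.exp (h ^ 2 / 8) ^ k := by
          rw [← Real.exp_nat_mul, ← Real.exp_sub]
          congr 1
          rw [hhdef]
          ring
      _ ≤ Real.exp (h * δ * k) / c ^ k := by
          apply div_le_div_of_nonneg_left (Real.exp_pos _).le hcpow e2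
      _ ≤ Real.exp (h * (p * k - Nr k ω)) / c ^ k :=
          div_le_div_of_nonneg_right e1 hcpow.le
  -- the finite-horizon bound
  have hkey : ∀ N : ℕ, (P (⋃ k ∈ Finset.Icc n N, A k)).toReal ≤
      Real.exp (-(2 * δ ^ 2 * n)) := by
    intro N
    set DD : ℕ → Set Ω := fun k => A k \ ⋃ j ∈ Finset.Ico n k, A j with hDDdef
    have hDDmeas : ∀ k, MeasurableSet (DD k) := fun k =>
      (hAmeas k).diff (MeasurableSet.biUnion (Finset.Ico n k).countable_toSet
        (fun j _ => hAmeas j))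
    have hDDsub : ∀ k, DD k ⊆ A k := fun k => Set.diff_subset
    have hcover : (⋃ k ∈ Finset.Icc n N, A k) ⊆ ⋃ k ∈ Finset.Icc n N, DD k := by
      intro ω hω
      simp only [Set.mem_iUnion] at hω ⊢
      obtain ⟨k₀, hk₀, hA₀⟩ := hω
      rw [Finset.mem_Icc] at hk₀
      have hex : ∃ k, n ≤ k ∧ ω ∈ A k := ⟨k₀, hk₀.1, hA₀⟩
      obtain ⟨hkn, hkA⟩ := Nat.find_spec hex
      have hkle : Nat.find hex ≤ k₀ := Nat.find_min' hex ⟨hk₀.1, hA₀⟩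
      refine ⟨Nat.find hex, Finset.mem_Icc.2 ⟨hkn, le_trans hkle hk₀.2⟩, hkA, ?_⟩
      intro hmem
      simp only [Set.mem_iUnion] at hmem
      obtain ⟨j, hj, hAj⟩ := hmem
      rw [Finset.mem_Ico] at hj
      exact Nat.find_min hex hj.2 ⟨hj.1, hAj⟩
    have hdisj_basic : ∀ {a b : ℕ}, n ≤ a → a < b → Disjoint (DD a) (DD b) := by
      intro a b hna hab
      refine Set.disjoint_left.2 (fun ω hωa hωb => ?_)
      refine hωb.2 ?_
      simp only [Set.mem_iUnion]
      exact ⟨a, Finset.mem_Ico.2 ⟨hna, hab⟩, hDDsub a hωa⟩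
    -- the full product
    set M : Ω → ℝ := fun ω => ∏ i ∈ Finset.range N, W i ω with hMdef
    have hMmeas : Measurable M := Finset.measurable_prod _ (fun i _ => hWmeas i)
    have hMpos : ∀ ω, 0 ≤ M ω := fun ω => Finset.prod_nonneg fun i _ => hWpos i ω
    have hMbd : ∀ ω, M ω ≤ Bw ^ N := by
      intro ω
      calc M ω ≤ ∏ i ∈ Finset.range N, Bw :=
            Finset.prod_le_prod (fun i _ => hWpos i ω) (fun i _ => hWbd i ω)
        _ = Bw ^ N := by rw [Finset.prod_const, Finset.card_range]
    have hMint : Integrable M P := integrable_prod_bdd P W hWmeas Bw hWpos hWbd _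
    have hMint1 : ∫ ω, M ω ∂P = 1 := by
      rw [hMdef]
      rw [integral_prod_indep P W hWind hWmeas (Finset.range N)]
      simp [hWint1]
    -- integrability of indicator * M
    have hIndMint : ∀ k, Integrable
        (fun ω => Set.indicator (DD k) (fun _ => (1:ℝ)) ω * M ω) P := by
      intro k
      refine integrable_of_bdd P ((measurable_const.indicator (hDDmeas k)).mul hMmeas)
        (C := Bw ^ N) (fun ω => ?_)
      rw [abs_of_nonneg]
      · by_cases hω : ω ∈ DD k
        · rw [Set.indicator_of_mem hω, one_mul]; exact hMbd ω
        · rw [Set.indicator_of_notMem hω, zero_mul]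
          positivity
      · by_cases hω : ω ∈ DD k
        · rw [Set.indicator_of_mem hω, one_mul]; exact hMpos ω
        · rw [Set.indicator_of_notMem hω, zero_mul]
    -- per-k estimate
    have hperk : ∀ k ∈ Finset.Icc n N,
        Real.exp (2 * δ ^ 2 * n) * (P (DD k)).toReal ≤
        ∫ ω, Set.indicator (DD k) (fun _ => (1:ℝ)) ω * M ω ∂P := by
      intro k hk
      rw [Finset.mem_Icc] at hk
      set g : Ω → ℝ := fun ω => ∏ i ∈ Finset.Ico k N, W i ω with hgdef
      have hgmeas : Measurable g := Finset.measurable_prod _ (fun i _ => hWmeas i)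
      have hgpos : ∀ ω, 0 ≤ g ω := fun ω => Finset.prod_nonneg fun i _ => hWpos i ω
      have hgbd : ∀ ω, g ω ≤ Bw ^ (Finset.Ico k N).card := by
        intro ω
        calc g ω ≤ ∏ i ∈ Finset.Ico k N, Bw :=
              Finset.prod_le_prod (fun i _ => hWpos i ω) (fun i _ => hWbd i ω)
          _ = _ := Finset.prod_const _
      have hgint : Integrable g P := integrable_prod_bdd P W hWmeas Bw hWpos hWbd _
      set Ind : Ω → ℝ := Set.indicator (DD k) (fun _ => (1:ℝ)) with hInddef
      have hIndmeas : Measurable Ind := measurable_const.indicator (hDDmeas k)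
      -- independence of Ind and g
      have hindIg : IndepFun Ind g P := by
        have hST : Disjoint (Finset.range k) (Finset.Ico k N) := by
          rw [Finset.disjoint_left]
          intro i hi hIco
          rw [Finset.mem_range] at hi
          rw [Finset.mem_Ico] at hIco
          omega
        have hbase := hindep.indepFun_finset (Finset.range k) (Finset.Ico k N) hST hmeas
        set cnt : ℕ → ((↥(Finset.range k)) → ℝ) → ℝ := fun j v =>
          ∑ i : ↥(Finset.range k), if ((i : ℕ) < j ∧ v i ≤ q + x) then (1:ℝ) else 0
          with hcntdef
        have hcntmeas : ∀ j, Measurable (cnt j) := by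
          intro j
          refine Finset.measurable_sum _ (fun i _ => ?_)
          by_cases hij : (i : ℕ) < j
          · have he : (fun v : (↥(Finset.range k)) → ℝ =>
                if ((i : ℕ) < j ∧ v i ≤ q + x) then (1:ℝ) else 0)
                = fun v => if v i ≤ q + x then (1:ℝ) else 0 := by
              funext v; simp [hij]
            rw [he]
            exact Measurable.ite (measurableSet_le (measurable_pi_apply i) measurable_const)
              measurable_const measurable_const
          · have he : (fun v : (↥(Finset.range k)) → ℝ =>
                if ((i : ℕ) < j ∧ v i ≤ q + x) then (1:ℝ) else 0) = fun _ => 0 := by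
              funext v; simp [hij]
            rw [he]
            exact measurable_const
        set AL : ℕ → Set ((↥(Finset.range k)) → ℝ) := fun j => {v | cnt j v < α * j}
          with hALdef
        have hALmeas : ∀ j, MeasurableSet (AL j) :=
          fun j => measurableSet_lt (hcntmeas j) measurable_const
        set DL : Set ((↥(Finset.range k)) → ℝ) := AL k \ ⋃ j ∈ Finset.Ico n k, AL j
          with hDLdef
        have hDLmeas : MeasurableSet DL :=
          (hALmeas k).diff (MeasurableSet.biUnion (Finset.Ico n k).countable_toSet
            (fun j _ => hALmeas j))
        have hcnt_eq : ∀ j, j ≤ k → ∀ ω,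
            cnt j (fun i : ↥(Finset.range k) => X i ω) = Nr j ω := by
          intro j hj ω
          simp only [hcntdef]
          rw [Finset.sum_coe_sort (Finset.range k)
            (fun i => if (i < j ∧ X i ω ≤ q + x) then (1:ℝ) else 0)]
          simp only [ite_and]
          rw [← Finset.sum_filter]
          have hfil : (Finset.range k).filter (fun i => i < j) = Finset.range j := by
            ext i
            simp only [Finset.mem_filter, Finset.mem_range]
            omega
          rw [hfil]
          exact (hNr_sum j ω).symm
        have hALiff : ∀ j, j ≤ k → ∀ ω : Ω,
            ((fun i : ↥(Finset.range k) => X i ω) ∈ AL j ↔ ω ∈ A j) := by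
          intro j hj ω
          simp only [hALdef, Set.mem_setOf_eq, hcnt_eq j hj ω, hAdef]
        have hDLiff : ∀ ω : Ω,
            ((fun i : ↥(Finset.range k) => X i ω) ∈ DL ↔ ω ∈ DD k) := by
          intro ω
          simp only [hDLdef, hDDdef, Set.mem_diff, Set.mem_iUnion]
          constructor
          · rintro ⟨h1, h2⟩
            refine ⟨(hALiff k le_rfl ω).1 h1, ?_⟩
            rintro ⟨j, hj, hAj⟩
            rw [Finset.mem_Ico] at hj
            exact h2 ⟨j, Finset.mem_Ico.2 hj, (hALiff j (le_of_lt hj.2) ω).2 hAj⟩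
          · rintro ⟨h1, h2⟩
            refine ⟨(hALiff k le_rfl ω).2 h1, ?_⟩
            rintro ⟨j, hj, hAj⟩
            rw [Finset.mem_Ico] at hj
            exact h2 ⟨j, Finset.mem_Ico.2 hj, (hALiff j (le_of_lt hj.2) ω).1 hAj⟩
        set φL : ((↥(Finset.range k)) → ℝ) → ℝ := Set.indicator DL (fun _ => 1) with hφLdef
        have hφLmeas : Measurable φL := measurable_const.indicator hDLmeas
        set φR : ((↥(Finset.Ico k N)) → ℝ) → ℝ :=
          fun v => ∏ i : ↥(Finset.Ico k N), w (v i) with hφRdef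
        have hφRmeas : Measurable φR :=
          Finset.measurable_prod _ (fun i _ => hwmeas.comp (measurable_pi_apply i))
        have hcomp := hbase.comp hφLmeas hφRmeas
        have heL : (φL ∘ fun (a : Ω) (i : ↥(Finset.range k)) => X i a) = Ind := by
          funext ω
          simp only [Function.comp_apply, hφLdef, hInddef]
          by_cases hω : ω ∈ DD k
          · rw [Set.indicator_of_mem ((hDLiff ω).2 hω), Set.indicator_of_mem hω]
          · rw [Set.indicator_of_notMem (fun hc => hω ((hDLiff ω).1 hc)),
              Set.indicator_of_notMem hω]
        have heR : (φR ∘ fun (a : Ω) (i : ↥(Finset.Ico k N)) => X i a) = g := by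
          funext ω
          simp only [Function.comp_apply, hφRdef, hgdef]
          rw [Finset.prod_coe_sort (Finset.Ico k N) (fun i => w (X i ω))]
        rw [heL, heR] at hcomp
        exact hcomp
      -- ∫ g = 1
      have hgint1 : ∫ ω, g ω ∂P = 1 := by
        rw [hgdef]
        rw [integral_prod_indep P W hWind hWmeas (Finset.Ico k N)]
        simp [hWint1]
      -- ∫ Ind = P (DD k)
      have hIndint : ∫ ω, Ind ω ∂P = (P (DD k)).toReal := by
        rw [hInddef, integral_indicator_const (1:ℝ) (hDDmeas k)]
        simp [measureReal_def]
      -- ∫ Ind * g = P (DD k)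
      have hIg : ∫ ω, Ind ω * g ω ∂P = (P (DD k)).toReal := by
        have hmul := hindIg.integral_mul_eq_mul_integral hIndmeas.aestronglyMeasurable
          hgmeas.aestronglyMeasurable
        have he : (fun ω => Ind ω * g ω) = Ind * g := rfl
        rw [he, hmul, hIndint, hgint1, mul_one]
      -- pointwise
      have hpt : ∀ ω, Real.exp (2 * δ ^ 2 * n) * (Ind ω * g ω) ≤ Ind ω * M ω := by
        intro ω
        simp only [hInddef]
        by_cases hω : ω ∈ DD k
        · rw [Set.indicator_of_mem hω (f := fun _ => (1:ℝ))]
          rw [one_mul, one_mul]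
          have hsplit : M ω = (∏ i ∈ Finset.range k, W i ω) * g ω :=
            (Finset.prod_range_mul_prod_Ico _ hk.2).symm
          rw [hsplit]
          exact mul_le_mul_of_nonneg_right (hprod_lb k hk.1 ω (hDDsub k hω)) (hgpos ω)
        · rw [Set.indicator_of_notMem hω (f := fun _ => (1:ℝ))]
          simp
      -- integrability of lhs
      have hLint : Integrable (fun ω => Real.exp (2 * δ ^ 2 * n) * (Ind ω * g ω)) P := by
        refine integrable_of_bdd P
          ((hIndmeas.mul hgmeas).const_mul _)
          (C := Real.exp (2 * δ ^ 2 * n) * Bw ^ (Finset.Ico k N).card) (fun ω => ?_)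
        simp only [hInddef]
        rw [abs_of_nonneg]
        · refine mul_le_mul_of_nonneg_left ?_ (Real.exp_pos _).le
          by_cases hω : ω ∈ DD k
          · rw [Set.indicator_of_mem hω (f := fun _ => (1:ℝ)), one_mul]
            exact hgbd ω
          · rw [Set.indicator_of_notMem hω (f := fun _ => (1:ℝ)), zero_mul]
            positivity
        · refine mul_nonneg (Real.exp_pos _).le (mul_nonneg ?_ (hgpos ω))
          exact Set.indicator_nonneg (fun _ _ => zero_le_one) ω
      calc Real.exp (2 * δ ^ 2 * n) * (P (DD k)).toReal
          = ∫ ω, Real.exp (2 * δ ^ 2 * n) * (Ind ω * g ω) ∂P := by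
            rw [integral_const_mul, hIg]
        _ ≤ ∫ ω, Ind ω * M ω ∂P := integral_mono hLint (hIndMint k) hpt
    -- sum of indicators is at most 1
    have hsumind : ∀ ω, (∑ k ∈ Finset.Icc n N,
        Set.indicator (DD k) (fun _ => (1:ℝ)) ω) ≤ 1 := by
      intro ω
      by_cases hex : ∃ k₀ ∈ Finset.Icc n N, ω ∈ DD k₀
      · obtain ⟨k₀, hk₀, hωk₀⟩ := hex
        have hle : ∀ k ∈ Finset.Icc n N,
            Set.indicator (DD k) (fun _ => (1:ℝ)) ω ≤ if k = k₀ then 1 else 0 := by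
          intro k hk
          by_cases hkk : k = k₀
          · subst hkk
            have hle1 : Set.indicator (DD k) (fun _ => (1:ℝ)) ω ≤ 1 := by
              by_cases hω : ω ∈ DD k
              · rw [Set.indicator_of_mem hω]
              · rw [Set.indicator_of_notMem hω]; norm_num
            simpa using hle1
          · have hωk : ω ∉ DD k := by
              intro hωk
              rcases Nat.lt_or_ge k k₀ with hlt | hge
              · have hnk : n ≤ k := (Finset.mem_Icc.1 hk).1
                exact Set.disjoint_left.1 (hdisj_basic hnk hlt) hωk hωk₀
              · have hlt : k₀ < k := lt_of_le_of_ne hge (Ne.symm hkk)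
                exact Set.disjoint_left.1 (hdisj_basic (Finset.mem_Icc.1 hk₀).1 hlt) hωk₀ hωk
            rw [Set.indicator_of_notMem hωk, if_neg hkk]
        calc (∑ k ∈ Finset.Icc n N, Set.indicator (DD k) (fun _ => (1:ℝ)) ω)
            ≤ ∑ k ∈ Finset.Icc n N, (if k = k₀ then (1:ℝ) else 0) :=
              Finset.sum_le_sum hle
          _ = 1 := by rw [Finset.sum_ite_eq' (Finset.Icc n N) k₀ (fun _ => (1:ℝ)),
              if_pos hk₀]
      · push_neg at hex
        have : ∀ k ∈ Finset.Icc n N, Set.indicator (DD k) (fun _ => (1:ℝ)) ω = 0 :=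
          fun k hk => Set.indicator_of_notMem (hex k hk) _
        rw [Finset.sum_congr rfl this]
        simp
    -- summing up
    have hsum_le : ∑ k ∈ Finset.Icc n N,
        (∫ ω, Set.indicator (DD k) (fun _ => (1:ℝ)) ω * M ω ∂P) ≤ 1 := by
      have h1 : ∑ k ∈ Finset.Icc n N,
          (∫ ω, Set.indicator (DD k) (fun _ => (1:ℝ)) ω * M ω ∂P)
          = ∫ ω, ∑ k ∈ Finset.Icc n N,
              Set.indicator (DD k) (fun _ => (1:ℝ)) ω * M ω ∂P :=
        (integral_finset_sum _ (fun k _ => hIndMint k)).symm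
      have h2 : ∫ ω, (∑ k ∈ Finset.Icc n N,
          Set.indicator (DD k) (fun _ => (1:ℝ)) ω * M ω) ∂P ≤ ∫ ω, M ω ∂P := by
        refine integral_mono (integrable_finset_sum _ (fun k _ => hIndMint k)) hMint
          (fun ω => ?_)
        show (∑ k ∈ Finset.Icc n N,
            Set.indicator (DD k) (fun _ => (1:ℝ)) ω * M ω) ≤ M ω
        rw [← Finset.sum_mul]
        exact mul_le_of_le_one_left (hMpos ω) (hsumind ω)
      rw [h1]
      exact le_trans h2 (le_of_eq hMint1)
    have hsumP : Real.exp (2 * δ ^ 2 * n) *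
        (∑ k ∈ Finset.Icc n N, (P (DD k)).toReal) ≤ 1 := by
      rw [Finset.mul_sum]
      exact le_trans (Finset.sum_le_sum hperk) hsum_le
    have hPB : (P (⋃ k ∈ Finset.Icc n N, A k)).toReal ≤
        ∑ k ∈ Finset.Icc n N, (P (DD k)).toReal := by
      have h1 : P (⋃ k ∈ Finset.Icc n N, A k) ≤ ∑ k ∈ Finset.Icc n N, P (DD k) :=
        le_trans (measure_mono hcover) (measure_biUnion_finset_le _ _)
      have h2 : (∑ k ∈ Finset.Icc n N, P (DD k)).toReal
          = ∑ k ∈ Finset.Icc n N, (P (DD k)).toReal :=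
        ENNReal.toReal_sum (fun k _ => measure_ne_top P _)
      calc (P (⋃ k ∈ Finset.Icc n N, A k)).toReal
          ≤ (∑ k ∈ Finset.Icc n N, P (DD k)).toReal := by
            refine ENNReal.toReal_mono ?_ h1
            exact (ENNReal.sum_lt_top.2 (fun k _ => measure_lt_top P _)).ne
        _ = _ := h2
    have hexp_pos := Real.exp_pos (2 * δ ^ 2 * (n:ℝ))
    have hfin : (∑ k ∈ Finset.Icc n N, (P (DD k)).toReal) ≤
        Real.exp (-(2 * δ ^ 2 * n)) := by
      rw [Real.exp_neg]
      have h1 : (∑ k ∈ Finset.Icc n N, (P (DD k)).toReal) ≤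
          1 / Real.exp (2 * δ ^ 2 * n) := by
        rw [le_div_iff₀ hexp_pos]
        calc (∑ k ∈ Finset.Icc n N, (P (DD k)).toReal) * Real.exp (2 * δ ^ 2 * n)
            = Real.exp (2 * δ ^ 2 * n) * (∑ k ∈ Finset.Icc n N, (P (DD k)).toReal) :=
              mul_comm _ _
          _ ≤ 1 := hsumP
      simpa [one_div] using h1
    exact le_trans hPB hfin
  -- assemble
  have hU : (⋃ k, ⋃ (_ : n ≤ k), A k) = ⋃ N, ⋃ k ∈ Finset.Icc n N, A k := by
    ext ω
    simp only [Set.mem_iUnion]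
    constructor
    · rintro ⟨k, hk, hA⟩
      exact ⟨k, k, Finset.mem_Icc.2 ⟨hk, le_refl k⟩, hA⟩
    · rintro ⟨N, k, hk, hA⟩
      exact ⟨k, (Finset.mem_Icc.1 hk).1, hA⟩
  rw [hset, hU]
  have hmono : Monotone (fun N => ⋃ k ∈ Finset.Icc n N, A k) := by
    intro N N' hNN'
    exact Set.biUnion_subset_biUnion_left (Finset.coe_subset.2 (Finset.Icc_subset_Icc_right hNN'))
  rw [hmono.directed_le.measure_iUnion]
  refine ENNReal.toReal_le_of_le_ofReal (Real.exp_nonneg _) (iSup_le (fun N => ?_))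
  have hb := hkey N
  have hexp_eq : Real.exp (-(2 * δ ^ 2 * n)) = Real.exp (-2 * n * δ ^ 2) := by
    congr 1
    ring
  rw [hexp_eq] at hb
  calc P (⋃ k ∈ Finset.Icc n N, A k)
      = ENNReal.ofReal ((P (⋃ k ∈ Finset.Icc n N, A k)).toReal) :=
        (ENNReal.ofReal_toReal (measure_ne_top P _)).symm
    _ ≤ ENNReal.ofReal (Real.exp (-2 * n * δ ^ 2)) := ENNReal.ofReal_le_ofReal hb
end

section
/- Let (Zₙ) be a sequence such that for constants K ≥ 0, β > 0, and for all ε > 0 there is β(ε) > 0 with P(sup_{k ≥ n} |Zₖ| > ε) ≤ K exp(-β(ε) n) for all n. Define L_ε = sup{k ∈ ℕ : |Z_k| > ε} (with L_ε = 0 if the set is empty, L_ε = ∞ if unbounded). Then E[L_ε^r] < ∞ for every r > 0 and every ε > 0, i.e., Zₙ → 0 r-quickly for all r > 0. -/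
open MeasureTheory
open scoped ENNReal

/-- Summability of `(n+1)^r * exp (-β n)` for `β > 0`. -/
lemma aux_summable (r β : ℝ) (hβ : 0 < β) :
    Summable (fun n : ℕ => ((n : ℝ) + 1) ^ r * Real.exp (-β * n)) := by
  have hg : Summable (fun n : ℕ => Real.exp (-(β / 2) * n)) := by
    simpa using Real.summable_pow_mul_exp_neg_nat_mul 0 (half_pos hβ)
  apply summable_of_isBigO_nat hg
  have h0 : Filter.Tendsto (fun n : ℕ => ((n : ℝ) + 1) ^ r * Real.exp (-(β / 2) * n))
      Filter.atTop (nhds 0) := by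
    have h1 := tendsto_rpow_mul_exp_neg_mul_atTop_nhds_zero r (β / 2) (half_pos hβ)
    have h2 : Filter.Tendsto (fun n : ℕ => ((n : ℝ) + 1)) Filter.atTop Filter.atTop :=
      Filter.tendsto_atTop_add_const_right _ 1 tendsto_natCast_atTop_atTop
    have h3 := (h1.comp h2).mul_const (Real.exp (β / 2))
    rw [zero_mul] at h3
    refine h3.congr fun n => ?_
    simp only [Function.comp]
    rw [mul_assoc, ← Real.exp_add]
    ring_nf
  have hB : (fun n : ℕ => ((n : ℝ) + 1) ^ r * Real.exp (-β * n)) =O[Filter.atTop]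
      (fun n : ℕ => Real.exp (-(β / 2) * n)) := by
    have := (h0.isBigO_one ℝ).mul (Asymptotics.isBigO_refl
      (fun n : ℕ => Real.exp (-(β / 2) * n)) Filter.atTop)
    refine this.congr' ?_ ?_
    · filter_upwards with n
      rw [mul_assoc, ← Real.exp_add]
      ring_nf
    · filter_upwards with n; rw [one_mul]
  exact hB

/-- Exponential supremal tail bounds imply `r`-quick convergence to `0` for every `r > 0`:
the last exit time `L_ε = sup{k : |Z_k| > ε}` (`0` if empty, `∞` if unbounded) has finite
`r`-th moment for every `ε > 0`. -/
theorem stmt_9 {Ω : Type*} [MeasurableSpace Ω] (P : Measure Ω) [IsProbabilityMeasure P]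
    (Z : ℕ → Ω → ℝ) (K : ℝ) (hK : 0 ≤ K)
    (hbound : ∀ ε : ℝ, 0 < ε → ∃ β : ℝ, 0 < β ∧ ∀ n : ℕ,
      P {ω | ∃ k, n ≤ k ∧ ε < |Z k ω|} ≤ ENNReal.ofReal (K * Real.exp (-β * n)))
    (L : ℝ → Ω → ℝ≥0∞)
    (hL : ∀ ε ω, L ε ω = ⨆ k ∈ {k : ℕ | ε < |Z k ω|}, (k : ℝ≥0∞))
    (r : ℝ) (hr : 0 < r) (ε : ℝ) (hε : 0 < ε) :
    ∫⁻ ω, (L ε ω) ^ r ∂P < ⊤ := by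
  obtain ⟨β, hβ, hb⟩ := hbound ε hε
  set S : ℕ → Set Ω := fun n => {ω | ∃ k, n ≤ k ∧ ε < |Z k ω|} with hS
  set A : ℕ → Set Ω := fun n => toMeasurable P (S n) with hA
  have hAmeas : ∀ n, MeasurableSet (A n) := fun n => measurableSet_toMeasurable P (S n)
  -- membership lemma: if (n : ℝ≥0∞) < L ε ω then ω ∈ S n
  have hmem : ∀ (n : ℕ) (ω : Ω), (n : ℝ≥0∞) < L ε ω → ω ∈ S n := by
    intro n ω hn
    rw [hL] at hn
    rw [lt_iSup_iff] at hn
    obtain ⟨k, hk⟩ := hn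
    rw [lt_iSup_iff] at hk
    obtain ⟨hkS, hklt⟩ := hk
    exact ⟨k, by exact_mod_cast hklt.le, hkS⟩
  -- the dominating function
  set g : Ω → ℝ≥0∞ := fun ω =>
    ∑' n : ℕ, ((n : ℝ≥0∞) + 1) ^ r * (A n).indicator (fun _ => (1 : ℝ≥0∞)) ω with hg
  -- pointwise bound
  have hpt : ∀ ω, (L ε ω) ^ r ≤ g ω := by
    intro ω
    rcases eq_or_ne (L ε ω) 0 with h0 | h0
    · rw [h0, ENNReal.zero_rpow_of_pos hr]; exact zero_le
    rcases eq_or_ne (L ε ω) ⊤ with htop | htop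
    · -- L = ⊤ : every term of g is ≥ 1, so g = ⊤
      have hmemall : ∀ n : ℕ, ω ∈ A n := fun n =>
        subset_toMeasurable P (S n) (hmem n ω (by rw [htop]; exact ENNReal.natCast_lt_top n))
      have : (⊤ : ℝ≥0∞) ≤ g ω := by
        calc (⊤ : ℝ≥0∞) = ∑' _ : ℕ, (1 : ℝ≥0∞) :=
              (ENNReal.tsum_const_eq_top_of_ne_zero one_ne_zero).symm
          _ ≤ g ω := by
              apply ENNReal.tsum_le_tsum
              intro n
              rw [Set.indicator_of_mem (hmemall n), mul_one]
              calc (1 : ℝ≥0∞) = (1 : ℝ≥0∞) ^ r := (ENNReal.one_rpow r).symm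
                _ ≤ ((n : ℝ≥0∞) + 1) ^ r :=
                    ENNReal.rpow_le_rpow (le_add_self) hr.le
      exact le_trans (le_top) this
    · -- 0 < L < ⊤ : pick n with n < L ≤ n+1
      set t : ℝ := (L ε ω).toReal with ht
      have htpos : 0 < t := ENNReal.toReal_pos h0 htop
      set n : ℕ := ⌈t⌉₊ - 1 with hn
      have hceil : 1 ≤ ⌈t⌉₊ := Nat.one_le_ceil_iff.mpr htpos
      have hn1 : (n : ℕ) + 1 = ⌈t⌉₊ := Nat.succ_pred_eq_of_pos hceil
      have hlt : (n : ℝ) < t := by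
        have := Nat.ceil_lt_add_one htpos.le
        have hcast : (n : ℝ) = (⌈t⌉₊ : ℝ) - 1 := by
          rw [hn, Nat.cast_sub hceil, Nat.cast_one]
        linarith
      have hle : t ≤ (n : ℝ) + 1 := by
        have := Nat.le_ceil t
        rw [← hn1] at this; push_cast at this; linarith
      have hLlt : (n : ℝ≥0∞) < L ε ω := by
        rw [← ENNReal.ofReal_natCast]
        refine ENNReal.ofReal_lt_iff_lt_toReal (Nat.cast_nonneg n) htop |>.mpr hlt
      have hLle : L ε ω ≤ (n : ℝ≥0∞) + 1 := by
        have : L ε ω ≤ ENNReal.ofReal ((n : ℝ) + 1) := by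
          rw [← ENNReal.ofReal_toReal htop]
          exact ENNReal.ofReal_le_ofReal hle
        refine this.trans ?_
        rw [ENNReal.ofReal_add (Nat.cast_nonneg n) zero_le_one]
        simp [ENNReal.ofReal_natCast]
      have hωA : ω ∈ A n := subset_toMeasurable P (S n) (hmem n ω hLlt)
      calc (L ε ω) ^ r ≤ ((n : ℝ≥0∞) + 1) ^ r := ENNReal.rpow_le_rpow hLle hr.le
        _ = ((n : ℝ≥0∞) + 1) ^ r * (A n).indicator (fun _ => (1 : ℝ≥0∞)) ω := by
            rw [Set.indicator_of_mem hωA, mul_one]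
        _ ≤ g ω := ENNReal.le_tsum n
  -- integrate
  have hint : ∫⁻ ω, (L ε ω) ^ r ∂P ≤ ∑' n : ℕ, ((n : ℝ≥0∞) + 1) ^ r * P (S n) := by
    calc ∫⁻ ω, (L ε ω) ^ r ∂P ≤ ∫⁻ ω, g ω ∂P := lintegral_mono hpt
      _ = ∑' n : ℕ, ∫⁻ ω, ((n : ℝ≥0∞) + 1) ^ r * (A n).indicator (fun _ => (1 : ℝ≥0∞)) ω ∂P := by
          rw [hg]
          exact lintegral_tsum fun n => (measurable_const.indicator (hAmeas n)).const_mul _ |>.aemeasurable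
      _ = ∑' n : ℕ, ((n : ℝ≥0∞) + 1) ^ r * P (A n) := by
          congr 1; funext n
          rw [lintegral_const_mul _ (measurable_const.indicator (hAmeas n)),
            lintegral_indicator (hAmeas n)]
          simp
      _ = ∑' n : ℕ, ((n : ℝ≥0∞) + 1) ^ r * P (S n) := by
          congr 1; funext n; rw [hA, measure_toMeasurable]
  have hfinal : ∑' n : ℕ, ((n : ℝ≥0∞) + 1) ^ r * P (S n) < ⊤ := by
    have hterm : ∀ n : ℕ, ((n : ℝ≥0∞) + 1) ^ r * P (S n) ≤
        ENNReal.ofReal (((n : ℝ) + 1) ^ r * (K * Real.exp (-β * n))) := by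
      intro n
      rw [ENNReal.ofReal_mul (by positivity)]
      apply mul_le_mul'
      · rw [← ENNReal.ofReal_rpow_of_nonneg (by positivity) hr.le]
        apply ENNReal.rpow_le_rpow _ hr.le
        rw [ENNReal.ofReal_add (Nat.cast_nonneg n) zero_le_one]
        simp [ENNReal.ofReal_natCast]
      · exact hb n
    refine lt_of_le_of_lt (ENNReal.tsum_le_tsum hterm) ?_
    rw [← ENNReal.ofReal_tsum_of_nonneg (fun n => by positivity)]
    · exact ENNReal.ofReal_lt_top
    · have := (aux_summable r β hβ).mul_left K
      refine this.congr fun n => ?_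
      ring
  exact lt_of_le_of_lt hint hfinal
end
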